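/- arXiv:1504.06079 — 8 statements merged into one kernel-verified Lean document; each statement's English description precedes it below -/
import Mathlib

section
/- Let ξ be a feasible design whose treatment proportions design w = w_ξ satisfies w_u > 0 for all u, and assume the contrast matrix Q has full column rank s. Then for every generalized inverse G of M(ξ), the matrix Kᵀ G K is symmetric positive definite and Qᵀ diag(w)⁻¹ Q ⪯ Kᵀ G K; equivalently, the information matrix N_K(ξ) = (Kᵀ G K)⁻¹ satisfies N_K(ξ) ⪯ N_Q(w). In words: introducing nuisance effects cannot increase the information about the treatment contrasts. -/
open Matrix Finset

noncomputable section

/-- An approximate design on `v` treatments and `n` nuisance conditions: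
nonnegative weights summing to one. -/
def IsDesign {v n : ℕ} (ξ : Fin v → Fin n → ℝ) : Prop :=
  (∀ u t, 0 ≤ ξ u t) ∧ ∑ u, ∑ t, ξ u t = 1

/-- The treatment proportions design of `ξ`: `(w_ξ)_u = ∑_t ξ(u,t)`. -/
def tpd {v n : ℕ} (ξ : Fin v → Fin n → ℝ) : Fin v → ℝ :=
  fun u => ∑ t, ξ u t

/-- The regression vector `f(u,t) = (e_uᵀ, h(t)ᵀ)ᵀ`. -/
def regvec {v n : ℕ} {ι : Type*} (h : Fin n → ι → ℝ) (u : Fin v) (t : Fin n) :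
    Fin v ⊕ ι → ℝ :=
  Sum.elim (fun i => if i = u then 1 else 0) (h t)

/-- The moment matrix `M(ξ) = ∑_{u,t} ξ(u,t) f(u,t) f(u,t)ᵀ`. -/
def momM {v n : ℕ} {ι : Type*} [Fintype ι] (h : Fin n → ι → ℝ)
    (ξ : Fin v → Fin n → ℝ) : Matrix (Fin v ⊕ ι) (Fin v ⊕ ι) ℝ :=
  ∑ u, ∑ t, ξ u t • vecMulVec (regvec h u t) (regvec h u t)

/-- The matrix `K = (Qᵀ, 0)ᵀ`. -/
def Kmat {v s : ℕ} (ι : Type*) (Q : Matrix (Fin v) (Fin s) ℝ) :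
    Matrix (Fin v ⊕ ι) (Fin s) ℝ :=
  Matrix.of fun i j => Sum.elim (fun a => Q a j) (fun _ => 0) i

/-- Feasibility of a design: the column space of `K` is contained in the
column space of `M(ξ)`. -/
def Feasible {v n s : ℕ} {ι : Type*} [Fintype ι] (h : Fin n → ι → ℝ)
    (Q : Matrix (Fin v) (Fin s) ℝ) (ξ : Fin v → Fin n → ℝ) : Prop :=
  LinearMap.range (Kmat ι Q).mulVecLin ≤ LinearMap.range (momM h ξ).mulVecLin

/-- `G` is a generalized inverse of `M`. -/
def IsGInv {ι : Type*} [Fintype ι] (M G : Matrix ι ι ℝ) : Prop :=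
  M * G * M = M

/-- Information matrix `N_Q(w) = (Qᵀ diag(w)⁻¹ Q)⁻¹` of a treatment
proportions design in the marginal model. -/
def NQ {v s : ℕ} (Q : Matrix (Fin v) (Fin s) ℝ) (w : Fin v → ℝ) :
    Matrix (Fin s) (Fin s) ℝ :=
  (Qᵀ * diagonal (fun u => (w u)⁻¹) * Q)⁻¹

/-- The matrix `H_ξ` whose `u`-th column is `(1/w_u) ∑_t ξ(u,t) h(t)`. -/
def Hmat {v n : ℕ} {ι : Type*} (h : Fin n → ι → ℝ) (ξ : Fin v → Fin n → ℝ) :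
    Matrix ι (Fin v) ℝ :=
  Matrix.of fun i u => (tpd ξ u)⁻¹ * ∑ t, ξ u t * h t i

/-- `ξ` is resistant to nuisance effects for the contrasts `Q`. -/
def NuisanceResistant {v n s : ℕ} {ι : Type*} (h : Fin n → ι → ℝ)
    (Q : Matrix (Fin v) (Fin s) ℝ) (ξ : Fin v → Fin n → ℝ) : Prop :=
  Hmat h ξ * Q = 0

/-- `ξ` is balanced: all columns of `H_ξ` coincide. -/
def BalancedDesign {v n : ℕ} {ι : Type*} (h : Fin n → ι → ℝ)
    (ξ : Fin v → Fin n → ℝ) : Prop :=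
  ∀ u u' : Fin v, (fun i => Hmat h ξ i u) = (fun i => Hmat h ξ i u')



lemma sum_mulVec' {α : Type*} {m k : Type*} [Fintype k] (s : Finset α)
    (A : α → Matrix m k ℝ) (x : k → ℝ) :
    (∑ i ∈ s, A i) *ᵥ x = ∑ i ∈ s, A i *ᵥ x := by
  induction s using Finset.cons_induction with
  | empty => simp
  | cons a s ha ih => simp [Finset.sum_cons, Matrix.add_mulVec, ih]

lemma dotProduct_sum' {α : Type*} {m : Type*} [Fintype m] (s : Finset α)
    (x : m → ℝ) (f : α → m → ℝ) :
    x ⬝ᵥ (∑ i ∈ s, f i) = ∑ i ∈ s, x ⬝ᵥ f i := by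
  induction s using Finset.cons_induction with
  | empty => simp
  | cons a s ha ih => simp [Finset.sum_cons, dotProduct_add, ih]

lemma momM_apply {v n d : ℕ} (h : Fin n → Fin d → ℝ) (ξ : Fin v → Fin n → ℝ)
    (i j : Fin v ⊕ Fin d) :
    momM h ξ i j = ∑ u, ∑ t, ξ u t * (regvec h u t i * regvec h u t j) := by
  unfold momM
  simp [Matrix.sum_apply, vecMulVec_apply, mul_assoc]

lemma momM_symm {v n d : ℕ} (h : Fin n → Fin d → ℝ) (ξ : Fin v → Fin n → ℝ) :
    (momM h ξ)ᵀ = momM h ξ := by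
  ext i j
  simp only [transpose_apply, momM_apply]
  exact Finset.sum_congr rfl fun u _ => Finset.sum_congr rfl fun t _ => by ring

lemma momM_posSemidef {v n d : ℕ} (h : Fin n → Fin d → ℝ) {ξ : Fin v → Fin n → ℝ}
    (hξ0 : ∀ u t, 0 ≤ ξ u t) : (momM h ξ).PosSemidef := by
  rw [posSemidef_iff_dotProduct_mulVec]
  constructor
  · rw [IsHermitian, conjTranspose_eq_transpose_of_trivial, momM_symm]
  · intro x
    unfold momM
    rw [star_trivial]
    rw [sum_mulVec', dotProduct_sum']
    refine Finset.sum_nonneg fun u _ => ?_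
    rw [sum_mulVec', dotProduct_sum']
    refine Finset.sum_nonneg fun t _ => ?_
    rw [smul_mulVec, dotProduct_smul]
    have : vecMulVec (regvec h u t) (regvec h u t) *ᵥ x
        = (regvec h u t ⬝ᵥ x) • regvec h u t := by
      ext i
      simp only [mulVec, dotProduct, vecMulVec_apply, Pi.smul_apply, smul_eq_mul,
        Finset.sum_mul]
      exact Finset.sum_congr rfl fun j _ => by ring
    rw [this, dotProduct_smul, smul_eq_mul, smul_eq_mul]
    have h2 : x ⬝ᵥ regvec h u t = regvec h u t ⬝ᵥ x := dotProduct_comm _ _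
    rw [h2]
    nlinarith [hξ0 u t, mul_self_nonneg (regvec h u t ⬝ᵥ x)]

lemma momM_inl {v n d : ℕ} (h : Fin n → Fin d → ℝ) (ξ : Fin v → Fin n → ℝ)
    (u : Fin v) (k : Fin v ⊕ Fin d) :
    momM h ξ (Sum.inl u) k = ∑ t, ξ u t * regvec h u t k := by
  rw [momM_apply]
  have : ∀ u' : Fin v, ∑ t, ξ u' t * (regvec h u' t (Sum.inl u) * regvec h u' t k)
      = if u = u' then ∑ t, ξ u' t * regvec h u' t k else 0 := by
    intro u'
    by_cases huu : u = u'
    · subst huu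
      simp [regvec]
    · simp [regvec, Ne.symm, huu]
  rw [Finset.sum_congr rfl fun u' _ => this u']
  simp

lemma momM_inl_inl {v n d : ℕ} (h : Fin n → Fin d → ℝ) (ξ : Fin v → Fin n → ℝ)
    (u u' : Fin v) :
    momM h ξ (Sum.inl u) (Sum.inl u') = if u' = u then tpd ξ u else 0 := by
  rw [momM_inl]
  by_cases e : u' = u
  · subst e; simp [regvec, tpd]
  · simp [regvec, e]

open scoped MatrixOrder in
lemma psd_CS {m : Type*} [Fintype m] [DecidableEq m] {S : Matrix m m ℝ} (hS : S.PosSemidef)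
    (a b : m → ℝ) : (a ⬝ᵥ S *ᵥ b)^2 ≤ (a ⬝ᵥ S *ᵥ a) * (b ⬝ᵥ S *ᵥ b) := by
  obtain ⟨B, rfl⟩ := CStarAlgebra.nonneg_iff_eq_star_mul_self.mp hS.nonneg
  simp only [star_eq_conjTranspose]
  have key : ∀ u w : m → ℝ, u ⬝ᵥ (Bᴴ * B) *ᵥ w = (B *ᵥ u) ⬝ᵥ (B *ᵥ w) := by
    intro u w
    rw [← Matrix.mulVec_mulVec, Matrix.dotProduct_mulVec,
      Matrix.conjTranspose_eq_transpose_of_trivial, Matrix.vecMul_transpose]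
  rw [key, key, key]
  have hcs := Finset.sum_mul_sq_le_sq_mul_sq Finset.univ (B *ᵥ a) (B *ᵥ b)
  simp only [dotProduct]
  calc (∑ i, (B *ᵥ a) i * (B *ᵥ b) i)^2
      ≤ (∑ i, (B *ᵥ a) i ^ 2) * (∑ i, (B *ᵥ b) i ^ 2) := hcs
    _ = (∑ i, (B *ᵥ a) i * (B *ᵥ a) i) * (∑ i, (B *ᵥ b) i * (B *ᵥ b) i) := by
        simp [pow_two]

lemma inv_sub_inv_posSemidef {k : Type*} [Fintype k] [DecidableEq k]
    {C N : Matrix k k ℝ}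
    (hC : C.PosDef) (hN : N.PosDef) (hle : (N - C).PosSemidef) :
    (C⁻¹ - N⁻¹).PosSemidef := by
  have hCi : C⁻¹.PosDef := hC.inv
  have hNi : N⁻¹.PosDef := hN.inv
  rw [posSemidef_iff_dotProduct_mulVec]
  constructor
  · exact hCi.isHermitian.sub hNi.isHermitian
  · intro x
    rw [star_trivial, Matrix.sub_mulVec, dotProduct_sub, sub_nonneg]
    set y := N⁻¹ *ᵥ x with hy
    set z := C⁻¹ *ᵥ x with hz
    set c := x ⬝ᵥ N⁻¹ *ᵥ x with hc
    set t := x ⬝ᵥ C⁻¹ *ᵥ x with ht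
    have hNx : N *ᵥ y = x := by
      rw [hy, Matrix.mulVec_mulVec, Matrix.mul_nonsing_inv _ hN.det_pos.ne'.isUnit,
        Matrix.one_mulVec]
    have hCz : C *ᵥ z = x := by
      rw [hz, Matrix.mulVec_mulVec, Matrix.mul_nonsing_inv _ hC.det_pos.ne'.isUnit,
        Matrix.one_mulVec]
    have hc0 : 0 ≤ c := by simpa [star_trivial] using hNi.posSemidef.dotProduct_mulVec_nonneg x
    have ht0 : 0 ≤ t := by simpa [star_trivial] using hCi.posSemidef.dotProduct_mulVec_nonneg x
    have hyNy : y ⬝ᵥ N *ᵥ y = c := by rw [hNx, dotProduct_comm]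
    have hyCy_le : y ⬝ᵥ C *ᵥ y ≤ c := by
      have := hle.dotProduct_mulVec_nonneg y
      rw [star_trivial, Matrix.sub_mulVec, dotProduct_sub, hyNy] at this
      linarith
    have hzCz : z ⬝ᵥ C *ᵥ z = t := by rw [hCz, dotProduct_comm]
    have hyx : y ⬝ᵥ C *ᵥ z = c := by rw [hCz, dotProduct_comm]
    have hCS := psd_CS hC.posSemidef y z
    rw [hyx, hzCz] at hCS
    have h1 : c^2 ≤ c * t := le_trans hCS (mul_le_mul_of_nonneg_right hyCy_le ht0)
    rcases eq_or_lt_of_le hc0 with h0 | h0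
    · rw [← h0]; exact ht0
    · nlinarith


/-- Introducing nuisance effects cannot increase the information
about the treatment contrasts: for a feasible design ξ with positive treatment
proportions w and full-column-rank contrast matrix Q, for every generalized
inverse G of M(ξ), the matrix KᵀGK is symmetric positive definite,
Qᵀ diag(w)⁻¹ Q ⪯ KᵀGK, and equivalently N_K(ξ) = (KᵀGK)⁻¹ ⪯ N_Q(w). -/
theorem stmt0 {v n d s : ℕ} (hv : 2 ≤ v)
    (h : Fin n → Fin d → ℝ) (Q : Matrix (Fin v) (Fin s) ℝ)
    (hQc : ∀ j, ∑ i, Q i j = 0) (hQrow : ∀ i, ∃ j, Q i j ≠ 0)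
    (hQrank : Q.rank = s)
    (ξ : Fin v → Fin n → ℝ) (hξ : IsDesign ξ)
    (hfeas : Feasible h Q ξ)
    (hw : ∀ u, 0 < tpd ξ u)
    (G : Matrix (Fin v ⊕ Fin d) (Fin v ⊕ Fin d) ℝ)
    (hG : IsGInv (momM h ξ) G) :
    ((Kmat (Fin d) Q)ᵀ * G * Kmat (Fin d) Q).PosDef ∧
    (((Kmat (Fin d) Q)ᵀ * G * Kmat (Fin d) Q)
        - Qᵀ * diagonal (fun u => (tpd ξ u)⁻¹) * Q).PosSemidef ∧
    (NQ Q (tpd ξ) - ((Kmat (Fin d) Q)ᵀ * G * Kmat (Fin d) Q)⁻¹).PosSemidef := by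
  classical
  obtain ⟨hξ0, hξ1⟩ := hξ
  have hMsymm := momM_symm h ξ
  have hMpsd := momM_posSemidef h hξ0
  set w : Fin v → ℝ := tpd ξ with hwdef
  set M : Matrix (Fin v ⊕ Fin d) (Fin v ⊕ Fin d) ℝ := momM h ξ with hM
  set K : Matrix (Fin v ⊕ Fin d) (Fin s) ℝ := Kmat (Fin d) Q with hK
  set A : Matrix (Fin v) (Fin v) ℝ := diagonal (fun u => (w u)⁻¹) with hA
  set C : Matrix (Fin s) (Fin s) ℝ := Qᵀ * A * Q with hC
  have hG' : M * G * M = M := hG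
  -- the matrix L with M * L = K
  have hcol : ∀ j : Fin s, ∃ y, M *ᵥ y = fun i => K i j := by
    intro j
    have hmem : (fun i => K i j) ∈ LinearMap.range K.mulVecLin := by
      refine ⟨Pi.single j 1, funext fun i => ?_⟩
      simp [Matrix.mulVecLin_apply, Matrix.mulVec_single]
    obtain ⟨y, hy⟩ := hfeas hmem
    exact ⟨y, hy⟩
  choose Lc hLc using hcol
  set L : Matrix (Fin v ⊕ Fin d) (Fin s) ℝ := Matrix.of (fun i j => Lc j i) with hL
  have hML : M * L = K := by
    ext i j
    have := congrFun (hLc j) i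
    simpa [Matrix.mul_apply, Matrix.mulVec, dotProduct, hL] using this
  -- K^T G K = L^T M L
  have hKt : Kᵀ = Lᵀ * M := by
    rw [← hML, Matrix.transpose_mul, hMsymm]
  have hKGK : Kᵀ * G * K = Lᵀ * M * L := by
    rw [hKt, ← hML]
    have : Lᵀ * M * G * (M * L) = Lᵀ * (M * G * M) * L := by
      simp only [Matrix.mul_assoc]
    rw [this, hG']
  -- the comparison matrix P
  set P : Matrix (Fin v ⊕ Fin d) (Fin s) ℝ :=
    Matrix.of (fun i j => Sum.elim (fun u => (w u)⁻¹ * Q u j) (fun _ => (0:ℝ)) i) with hP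
  have hCapply : ∀ j j', C j j' = ∑ u, (w u)⁻¹ * (Q u j * Q u j') := by
    intro j j'
    rw [hC, Matrix.mul_apply]
    refine Finset.sum_congr rfl fun u _ => ?_
    rw [hA, Matrix.mul_diagonal, Matrix.transpose_apply]
    ring
  have hPtX : ∀ X : Matrix (Fin v ⊕ Fin d) (Fin s) ℝ,
      (∀ u j', X (Sum.inl u) j' = Q u j') → Pᵀ * X = C := by
    intro X hX
    ext j j'
    rw [Matrix.mul_apply, Fintype.sum_sum_type, hCapply]
    simp only [Matrix.transpose_apply, hP, Matrix.of_apply, Sum.elim_inl, Sum.elim_inr,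
      zero_mul, Finset.sum_const_zero, add_zero, hX]
    exact Finset.sum_congr rfl fun u _ => by ring
  have hKinl : ∀ u j', K (Sum.inl u) j' = Q u j' := fun u j' => rfl
  have hPK : Pᵀ * K = C := hPtX K hKinl
  have hMPinl : ∀ u j, (M * P) (Sum.inl u) j = Q u j := by
    intro u j
    rw [Matrix.mul_apply, Fintype.sum_sum_type]
    have hMd : ∀ u', M (Sum.inl u) (Sum.inl u') = if u' = u then w u else 0 := by
      intro u'
      rw [hM]
      exact momM_inl_inl h ξ u u'
    simp only [hMd, hP, Matrix.of_apply, Sum.elim_inl, Sum.elim_inr, mul_zero,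
      Finset.sum_const_zero, add_zero, ite_mul, zero_mul]
    rw [Finset.sum_ite_eq' Finset.univ u (fun u' => w u * ((w u')⁻¹ * Q u' j))]
    simp only [Finset.mem_univ, if_true]
    rw [← mul_assoc, mul_inv_cancel₀ (hw u).ne', one_mul]
  have hPMP : Pᵀ * M * P = C := by
    rw [Matrix.mul_assoc]
    exact hPtX (M * P) hMPinl
  have hPML : Pᵀ * M * L = C := by
    rw [Matrix.mul_assoc, hML]
    exact hPK
  have hCt : Cᵀ = C := by
    rw [hC, hA]
    rw [Matrix.transpose_mul, Matrix.transpose_mul, Matrix.transpose_transpose,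
      Matrix.diagonal_transpose, Matrix.mul_assoc]
  have hLMP : Lᵀ * M * P = C := by
    have h2 := congrArg Matrix.transpose hPML
    rw [Matrix.transpose_mul, Matrix.transpose_mul, Matrix.transpose_transpose,
      hMsymm, hCt] at h2
    rw [Matrix.mul_assoc]
    exact h2
  set E : Matrix (Fin v ⊕ Fin d) (Fin s) ℝ := L - P with hE
  have hEq : Eᵀ * M * E = Lᵀ * M * L - C := by
    rw [hE, Matrix.transpose_sub, Matrix.sub_mul, Matrix.sub_mul, Matrix.mul_sub,
      Matrix.mul_sub, hLMP, hPML, hPMP]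
    abel
  have hEpsd : (Eᵀ * M * E).PosSemidef := by
    have h3 := hMpsd.conjTranspose_mul_mul_same E
    rwa [Matrix.conjTranspose_eq_transpose_of_trivial] at h3
  -- C is positive definite
  have hApd : A.PosDef := by
    rw [hA]
    exact Matrix.posDef_diagonal_iff.mpr fun u => inv_pos.mpr (hw u)
  have hQinj : Function.Injective Q.mulVecLin := by
    rw [← LinearMap.ker_eq_bot]
    have h1 := LinearMap.finrank_range_add_finrank_ker Q.mulVecLin
    have h2 : Module.finrank ℝ (LinearMap.range Q.mulVecLin) = s := hQrank
    have h4 : Module.finrank ℝ (Fin s → ℝ) = s := by simp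
    rw [h2, h4] at h1
    have h3 : Module.finrank ℝ (LinearMap.ker Q.mulVecLin) = 0 := by omega
    exact Submodule.finrank_eq_zero.mp h3
  have hCpd : C.PosDef := by
    rw [posDef_iff_dotProduct_mulVec]
    constructor
    · rw [Matrix.IsHermitian, Matrix.conjTranspose_eq_transpose_of_trivial, hCt]
    · intro x hx
      rw [star_trivial]
      have hQx : Q *ᵥ x ≠ 0 := by
        intro h0
        apply hx
        have : Q.mulVecLin x = Q.mulVecLin 0 := by
          rw [Matrix.mulVecLin_apply, h0, map_zero]
        exact hQinj this
      have hpos := hApd.dotProduct_mulVec_pos hQx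
      rw [star_trivial] at hpos
      have heq : x ⬝ᵥ C *ᵥ x = (Q *ᵥ x) ⬝ᵥ A *ᵥ (Q *ᵥ x) := by
        rw [hC, ← Matrix.mulVec_mulVec, ← Matrix.mulVec_mulVec,
          Matrix.dotProduct_mulVec, Matrix.vecMul_transpose]
      rw [heq]
      exact hpos
  -- assembling
  have hsum : Kᵀ * G * K = C + Eᵀ * M * E := by
    rw [hEq, hKGK, add_sub_cancel]
  have part1 : (Kᵀ * G * K).PosDef := by
    rw [hsum]
    exact hCpd.add_posSemidef hEpsd
  have part2 : (Kᵀ * G * K - C).PosSemidef := by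
    rw [hKGK, ← hEq]
    exact hEpsd
  refine ⟨part1, part2, ?_⟩
  have hNQ : NQ Q w = C⁻¹ := rfl
  rw [hNQ]
  exact inv_sub_inv_posSemidef hCpd part1 part2


end
end

section
/- Let w ∈ ℝ^v with w_u > 0 for all u and Σ_u w_u = 1, and set G = diag(diag(w)⁻¹, 0_{d×d}) ∈ ℝ^{(v+d)×(v+d)}, the block diagonal matrix with blocks diag(w)⁻¹ and the zero d × d matrix. A design ξ satisfies M(ξ) G K = K if and only if both (i) w is the treatment proportions design of ξ, i.e., Σ_{t∈T} ξ(u,t) = w_u for all u, and (ii) ξ is nuisance resistant for Q. -/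
open Matrix Finset

noncomputable section

lemma momM_apply_inl {v n : ℕ} {ι : Type*} [Fintype ι] (h : Fin n → ι → ℝ)
    (ξ : Fin v → Fin n → ℝ) (i : Fin v ⊕ ι) (a : Fin v) :
    momM h ξ i (Sum.inl a) = ∑ t, ξ a t * regvec h a t i := by
  have : momM h ξ i (Sum.inl a)
      = ∑ u, ∑ t, ξ u t * (regvec h u t i * regvec h u t (Sum.inl a)) := by
    simp [momM, Matrix.sum_apply, vecMulVec_apply, mul_assoc]
  rw [this, Finset.sum_eq_single a]
  · simp [regvec]
  · intro b _ hb
    simp [regvec, Ne.symm hb]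
  · simp

/-- With G = diag(diag(w)⁻¹, 0), a design ξ satisfies
M(ξ) G K = K iff (i) w is the treatment proportions design of ξ and
(ii) ξ is nuisance resistant for Q. -/
theorem stmt2 {v n d s : ℕ} (hv : 2 ≤ v)
    (h : Fin n → Fin d → ℝ) (Q : Matrix (Fin v) (Fin s) ℝ)
    (hQc : ∀ j, ∑ i, Q i j = 0) (hQrow : ∀ i, ∃ j, Q i j ≠ 0)
    (w : Fin v → ℝ) (hw : ∀ u, 0 < w u) (hw1 : ∑ u, w u = 1)
    (ξ : Fin v → Fin n → ℝ) (hξ : IsDesign ξ)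
    (G : Matrix (Fin v ⊕ Fin d) (Fin v ⊕ Fin d) ℝ)
    (hG : G = Matrix.fromBlocks (diagonal fun u => (w u)⁻¹) 0 0 0) :
    momM h ξ * G * Kmat (Fin d) Q = Kmat (Fin d) Q ↔
      ((∀ u, tpd ξ u = w u) ∧ NuisanceResistant h Q ξ) := by
  classical
  have hwne : ∀ u, w u ≠ 0 := fun u => (hw u).ne'
  have key : ∀ (i : Fin v ⊕ Fin d) (j : Fin s),
      (momM h ξ * G * Kmat (Fin d) Q) i j
        = ∑ a, (∑ t, ξ a t * regvec h a t i) * ((w a)⁻¹ * Q a j) := by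
    intro i j
    rw [Matrix.mul_assoc, Matrix.mul_apply, Fintype.sum_sum_type]
    have h1 : ∀ a : Fin v,
        (G * Kmat (Fin d) Q) (Sum.inl a) j = (w a)⁻¹ * Q a j := by
      intro a
      rw [hG, Matrix.mul_apply, Fintype.sum_sum_type]
      simp [Kmat, fromBlocks, diagonal_apply, Finset.sum_ite_eq]
    have h2 : ∀ b : Fin d,
        (G * Kmat (Fin d) Q) (Sum.inr b) j = 0 := by
      intro b
      rw [hG, Matrix.mul_apply, Fintype.sum_sum_type]
      simp [Kmat, fromBlocks]
    simp only [h1, h2, mul_zero, Finset.sum_const_zero, add_zero, momM_apply_inl]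
  have keyl : ∀ (b : Fin v) (j : Fin s),
      (momM h ξ * G * Kmat (Fin d) Q) (Sum.inl b) j
        = tpd ξ b * ((w b)⁻¹ * Q b j) := by
    intro b j
    rw [key, Finset.sum_eq_single b]
    · simp [regvec, tpd]
    · intro a _ ha
      simp [regvec, Ne.symm ha]
    · simp
  have keyr : ∀ (i' : Fin d) (j : Fin s),
      (momM h ξ * G * Kmat (Fin d) Q) (Sum.inr i') j
        = ∑ a, (∑ t, ξ a t * h t i') * ((w a)⁻¹ * Q a j) := by
    intro i' j
    rw [key]
    simp [regvec]
  constructor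
  · intro hEq
    have hE : ∀ i j, (momM h ξ * G * Kmat (Fin d) Q) i j = Kmat (Fin d) Q i j :=
      fun i j => by rw [hEq]
    have htpd : ∀ u, tpd ξ u = w u := by
      intro b
      obtain ⟨j, hj⟩ := hQrow b
      have h0 := hE (Sum.inl b) j
      rw [keyl] at h0
      have hK : Kmat (Fin d) Q (Sum.inl b) j = Q b j := rfl
      rw [hK] at h0
      have h3 : tpd ξ b * (w b)⁻¹ = 1 := by
        apply mul_right_cancel₀ hj
        rw [one_mul, mul_assoc]
        exact h0
      field_simp [hwne b] at h3
      exact h3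
    refine ⟨htpd, ?_⟩
    ext i' u'
    show (Hmat h ξ * Q) i' u' = 0
    have h0 := hE (Sum.inr i') u'
    rw [keyr] at h0
    have hK : Kmat (Fin d) Q (Sum.inr i') u' = 0 := rfl
    rw [hK] at h0
    rw [Matrix.mul_apply, ← h0]
    refine Finset.sum_congr rfl fun a _ => ?_
    rw [Hmat, Matrix.of_apply, htpd a]
    ring
  · rintro ⟨htpd, hnr⟩
    ext i j
    cases i with
    | inl b =>
      rw [keyl, htpd b]
      show w b * ((w b)⁻¹ * Q b j) = Q b j
      field_simp [hwne b]
    | inr i' =>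
      rw [keyr]
      show _ = (0 : ℝ)
      have h0 := congrFun (congrFun hnr i') j
      rw [Matrix.mul_apply] at h0
      simp only [Matrix.zero_apply] at h0
      rw [← h0]
      refine Finset.sum_congr rfl fun a _ => ?_
      rw [Hmat, Matrix.of_apply, htpd a]
      ring


end
end

section
/- Let ξ be a design that is nuisance resistant for Q and whose treatment proportions design w = w_ξ satisfies w_u > 0 for all u. Then (i) ξ is feasible; (ii) Kᵀ G K = Qᵀ diag(w)⁻¹ Q for every generalized inverse G of M(ξ); and consequently (iii) if Q has full column rank s, ξ has the same information matrix as w, namely (Kᵀ G K)⁻¹ = N_Q(w). -/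
open Matrix Finset

noncomputable section

/-- Auxiliary: the matrix `L = (W⁻¹Q ; 0)`. -/
def Laux {v n d s : ℕ} (ξ : Fin v → Fin n → ℝ) (Q : Matrix (Fin v) (Fin s) ℝ) :
    Matrix (Fin v ⊕ Fin d) (Fin s) ℝ :=
  Matrix.of fun i j => Sum.elim (fun a => (tpd ξ a)⁻¹ * Q a j) (fun _ => 0) i

lemma momM_mul_Laux {v n d s : ℕ}
    (h : Fin n → Fin d → ℝ) (Q : Matrix (Fin v) (Fin s) ℝ)
    (ξ : Fin v → Fin n → ℝ)
    (hw : ∀ u, 0 < tpd ξ u)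
    (hres : Hmat h ξ * Q = 0) :
    momM h ξ * Laux (d := d) ξ Q = Kmat (Fin d) Q := by
  have hM : ∀ i a, momM h ξ i (Sum.inl a) = ∑ t, ξ a t * regvec h a t i := by
    intro i a
    simp only [momM, Matrix.sum_apply, Matrix.smul_apply, vecMulVec_apply, smul_eq_mul,
      regvec, Sum.elim_inl]
    rw [Finset.sum_comm]
    refine Finset.sum_congr rfl fun t _ => ?_
    rw [Finset.sum_eq_single a]
    · simp [regvec]
    · intro u _ hu
      rw [if_neg (fun hh => hu hh.symm)]
      ring
    · simp
  ext i j
  rw [Matrix.mul_apply, Fintype.sum_sum_type]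
  simp only [Laux, Matrix.of_apply, Sum.elim_inl, Sum.elim_inr, mul_zero,
    Finset.sum_const_zero, add_zero]
  cases i with
  | inl b =>
    simp only [hM, regvec, Sum.elim_inl, Kmat, Matrix.of_apply]
    rw [Finset.sum_eq_single b]
    · simp only [if_pos rfl, mul_one, eq_self_iff_true, if_true]
      rw [show ∑ t, ξ b t = tpd ξ b from rfl]
      have := (hw b).ne'
      field_simp
    · intro a _ hab
      simp [if_neg (Ne.symm hab)]
    · simp
  | inr c =>
    have h0 : (Hmat h ξ * Q) c j = 0 := by rw [hres]; rfl
    rw [Matrix.mul_apply] at h0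
    simp only [hM, regvec, Sum.elim_inr, Kmat, Matrix.of_apply]
    rw [← h0]
    apply Finset.sum_congr rfl
    intro a _
    simp only [Hmat, Matrix.of_apply]
    ring

lemma Laux_transpose_mul_Kmat {v n d s : ℕ}
    (ξ : Fin v → Fin n → ℝ) (Q : Matrix (Fin v) (Fin s) ℝ) :
    (Laux (d := d) ξ Q)ᵀ * Kmat (Fin d) Q
      = Qᵀ * diagonal (fun u => (tpd ξ u)⁻¹) * Q := by
  ext j j'
  rw [Matrix.mul_apply, Fintype.sum_sum_type]
  simp only [transpose_apply, Laux, Kmat, Matrix.of_apply, Sum.elim_inl, Sum.elim_inr,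
    zero_mul, Finset.sum_const_zero, add_zero]
  rw [Matrix.mul_apply]
  refine Finset.sum_congr rfl fun a _ => ?_
  rw [Matrix.mul_diagonal, transpose_apply]
  ring

/-- A nuisance resistant design ξ with positive treatment
proportions w = w_ξ is (i) feasible, (ii) satisfies KᵀGK = Qᵀ diag(w)⁻¹ Q for
every generalized inverse G of M(ξ), and (iii) if Q has full column rank s,
ξ has the same information matrix as w: (KᵀGK)⁻¹ = N_Q(w). -/
theorem stmt3 {v n d s : ℕ} (hv : 2 ≤ v)
    (h : Fin n → Fin d → ℝ) (Q : Matrix (Fin v) (Fin s) ℝ)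
    (hQc : ∀ j, ∑ i, Q i j = 0) (hQrow : ∀ i, ∃ j, Q i j ≠ 0)
    (ξ : Fin v → Fin n → ℝ) (hξ : IsDesign ξ)
    (hw : ∀ u, 0 < tpd ξ u)
    (hres : NuisanceResistant h Q ξ) :
    Feasible h Q ξ ∧
    (∀ G, IsGInv (momM h ξ) G →
      (Kmat (Fin d) Q)ᵀ * G * Kmat (Fin d) Q
        = Qᵀ * diagonal (fun u => (tpd ξ u)⁻¹) * Q) ∧
    (Q.rank = s → ∀ G, IsGInv (momM h ξ) G →
      ((Kmat (Fin d) Q)ᵀ * G * Kmat (Fin d) Q)⁻¹ = NQ Q (tpd ξ)) := by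
  have hML := momM_mul_Laux h Q ξ hw hres
  have key : ∀ G, IsGInv (momM h ξ) G →
      (Kmat (Fin d) Q)ᵀ * G * Kmat (Fin d) Q
        = Qᵀ * diagonal (fun u => (tpd ξ u)⁻¹) * Q := by
    intro G hG
    have : (Kmat (Fin d) Q)ᵀ * G * Kmat (Fin d) Q
        = ((Laux (d := d) ξ Q)ᵀ * (momM h ξ * G * momM h ξ) * Laux (d := d) ξ Q : Matrix (Fin s) (Fin s) ℝ) := by
      rw [← hML, transpose_mul, momM_symm]
      simp only [Matrix.mul_assoc]
    rw [this, show momM h ξ * G * momM h ξ = momM h ξ from hG,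
      Matrix.mul_assoc, hML, Laux_transpose_mul_Kmat]
  refine ⟨?_, key, ?_⟩
  · rintro y ⟨x, rfl⟩
    refine ⟨(Laux ξ Q).mulVec x, ?_⟩
    simp only [mulVecLin_apply, ← hML, ← Matrix.mulVec_mulVec]
  · intro _ G hG
    rw [key G hG]
    rfl

end
end

section
/- Let v ≥ 2 and let Q be a v × (v−1) real matrix with Qᵀ1_v = 0 and QQᵀ = a(I_v − J_v/v) for some a > 0 (a completely symmetric, full-column-rank system of contrasts). Let Φ : ℝ^{(v−1)×(v−1)} → ℝ be concave, Loewner-isotone on positive semidefinite matrices, and orthogonally invariant (Φ(U N Uᵀ) = Φ(N) for every orthogonal (v−1) × (v−1) matrix U). Then the uniform treatment proportions design w̄ = (1/v, …, 1/v)ᵀ is Φ-optimal in the marginal model: Φ((Qᵀ diag(w)⁻¹ Q)⁻¹) ≤ Φ((Qᵀ diag(w̄)⁻¹ Q)⁻¹) for every w ∈ ℝ^v with all w_u > 0 and Σ_u w_u = 1. -/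
open Matrix Finset

noncomputable section

namespace Stmt11Aux

variable {m : Type*} [Fintype m] [DecidableEq m]

lemma ct {k l : Type*} (A : Matrix k l ℝ) : Aᴴ = Aᵀ := by
  ext i j; simp [Matrix.conjTranspose_apply]

lemma psd_smul {A : Matrix m m ℝ} (hA : A.PosSemidef) {c : ℝ} (hc : 0 ≤ c) :
    (c • A).PosSemidef := by
  refine ⟨?_, fun x => ?_⟩
  · unfold Matrix.IsHermitian
    rw [conjTranspose_smul, hA.1]
    simp
  · convert mul_nonneg hc (hA.2 x) using 1
    simp only [Finsupp.mul_sum, Matrix.smul_apply, smul_eq_mul]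
    exact Finsupp.sum_congr fun i _ => Finsupp.sum_congr fun j _ => by ring

lemma psd_sum {ι : Type*} (s : Finset ι) (A : ι → Matrix m m ℝ)
    (hA : ∀ i ∈ s, (A i).PosSemidef) : (∑ i ∈ s, A i).PosSemidef := by
  classical
  induction s using Finset.cons_induction with
  | empty => simpa using (Matrix.PosSemidef.zero (n := m) (R := ℝ))
  | cons x t hx ih =>
    rw [Finset.sum_cons]
    exact (hA x (Finset.mem_cons_self x t)).add
      (ih fun i hi => hA i (Finset.mem_cons_of_mem hi))

lemma jensen {ι : Type*} (Φ : Matrix m m ℝ → ℝ)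
    (hconc : ∀ α : ℝ, 0 ≤ α → α ≤ 1 →
      ∀ A B : Matrix m m ℝ, A.PosSemidef → B.PosSemidef →
        α * Φ A + (1 - α) * Φ B ≤ Φ (α • A + (1 - α) • B)) :
    ∀ (s : Finset ι), s.Nonempty → ∀ (A : ι → Matrix m m ℝ),
      (∀ i ∈ s, (A i).PosSemidef) →
      ∑ i ∈ s, Φ (A i) ≤ s.card * Φ ((s.card : ℝ)⁻¹ • ∑ i ∈ s, A i) := by
  intro s hs
  induction hs using Finset.Nonempty.cons_induction with
  | singleton x => intro A hA; simp
  | cons x t hx ht ih =>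
    intro A hA
    have hApsd : ∀ i ∈ t, (A i).PosSemidef := fun i hi => hA i (Finset.mem_cons_of_mem hi)
    have hAx : (A x).PosSemidef := hA x (Finset.mem_cons_self x t)
    set k : ℝ := (t.card : ℝ) with hk
    have hk1 : (1 : ℝ) ≤ k := by
      have := ht.card_pos
      rw [hk]
      exact_mod_cast this
    have hk0 : (0:ℝ) < k := lt_of_lt_of_le one_pos hk1
    have hn0 : (0:ℝ) < k + 1 := by linarith
    have hcard : ((Finset.cons x t hx).card : ℝ) = k + 1 := by
      rw [Finset.card_cons]; push_cast [hk]; ring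
    set α : ℝ := k / (k + 1) with hα
    have hα0 : 0 ≤ α := by positivity
    have hα1 : α ≤ 1 := by rw [hα, div_le_one hn0]; linarith
    have h1α : 1 - α = (k + 1)⁻¹ := by
      rw [hα]; field_simp; ring
    set S : Matrix m m ℝ := ∑ i ∈ t, A i with hS
    have hSpsd : S.PosSemidef := psd_sum t A hApsd
    have havg : (k⁻¹ • S).PosSemidef := psd_smul hSpsd (by positivity)
    have key := hconc α hα0 hα1 (k⁻¹ • S) (A x) havg hAx
    have harg : α • (k⁻¹ • S) + (1 - α) • A x
        = ((k+1)⁻¹ : ℝ) • ∑ i ∈ Finset.cons x t hx, A i := by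
      rw [Finset.sum_cons, smul_smul, h1α, smul_add, ← hS]
      have hαk : α * k⁻¹ = (k+1)⁻¹ := by
        rw [hα]; field_simp
      rw [hαk]
      abel
    rw [harg] at key
    have hiht := ih A hApsd
    rw [Finset.sum_cons, hcard]
    have h2 : Φ (A x) + ∑ i ∈ t, Φ (A i)
        ≤ (k+1) * (α * Φ (k⁻¹ • S) + (1 - α) * Φ (A x)) := by
      have step : Φ (A x) + ∑ i ∈ t, Φ (A i) ≤ Φ (A x) + k * Φ (k⁻¹ • S) := by
        linarith [hiht]
      refine step.trans (le_of_eq ?_)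
      rw [hα]; field_simp; ring
    exact h2.trans (mul_le_mul_of_nonneg_left key hn0.le)

lemma isUnit_of_rank_eq_card {n : Type*} [Fintype n] [DecidableEq n]
    (A : Matrix n n ℝ) (h : A.rank = Fintype.card n) : IsUnit A := by
  rw [← Matrix.mulVec_surjective_iff_isUnit]
  have hr : LinearMap.range A.mulVecLin = ⊤ := by
    apply Submodule.eq_top_of_finrank_eq
    have hrk : A.rank = Module.finrank ℝ (LinearMap.range A.mulVecLin) := rfl
    rw [← hrk, h, Module.finrank_fintype_fun_eq_card]
  intro y
  obtain ⟨x, hx⟩ := LinearMap.range_eq_top.mp hr y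
  exact ⟨x, hx⟩

end Stmt11Aux

open Stmt11Aux

/-- For a completely symmetric system of contrasts
(QQᵀ = a(I − J/v), a > 0, Q of full column rank v−1) and any concave,
Loewner-isotone, orthogonally invariant criterion Φ, the uniform treatment
proportions design w̄ = 1_v/v is Φ-optimal in the marginal model. -/
theorem stmt11 {v : ℕ} (hv : 2 ≤ v) (a : ℝ) (ha : 0 < a)
    (Q : Matrix (Fin v) (Fin (v - 1)) ℝ)
    (hQc : ∀ j, ∑ i, Q i j = 0)
    (hQrank : Q.rank = v - 1)
    (hQQ : Q * Qᵀ = a • ((1 : Matrix (Fin v) (Fin v) ℝ)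
        - (v : ℝ)⁻¹ • Matrix.of (fun _ _ => (1 : ℝ))))
    (Φ : Matrix (Fin (v - 1)) (Fin (v - 1)) ℝ → ℝ)
    (hconc : ∀ α : ℝ, 0 ≤ α → α ≤ 1 →
      ∀ A B : Matrix (Fin (v - 1)) (Fin (v - 1)) ℝ, A.PosSemidef → B.PosSemidef →
        α * Φ A + (1 - α) * Φ B ≤ Φ (α • A + (1 - α) • B))
    (hiso : ∀ A B : Matrix (Fin (v - 1)) (Fin (v - 1)) ℝ,
      A.PosSemidef → B.PosSemidef → (B - A).PosSemidef → Φ A ≤ Φ B)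
    (hinv : ∀ U : Matrix (Fin (v - 1)) (Fin (v - 1)) ℝ, U * Uᵀ = 1 →
      ∀ N : Matrix (Fin (v - 1)) (Fin (v - 1)) ℝ, Φ (U * N * Uᵀ) = Φ N)
    (w : Fin v → ℝ) (hw : ∀ u, 0 < w u) (hw1 : ∑ u, w u = 1) :
    Φ ((Qᵀ * diagonal (fun u => (w u)⁻¹) * Q)⁻¹) ≤
      Φ ((Qᵀ * diagonal (fun _ : Fin v => ((v : ℝ)⁻¹)⁻¹) * Q)⁻¹) := by
  classical
  haveI : NeZero v := ⟨by omega⟩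
  have ha' : a ≠ 0 := ha.ne'
  have hvR : (0:ℝ) < (v:ℝ) := by exact_mod_cast (by omega : 0 < v)
  set J : Matrix (Fin v) (Fin v) ℝ := Matrix.of (fun _ _ => (1:ℝ)) with hJ
  -- J kills matrices with zero column sums
  have hJR0 : ∀ (R : Matrix (Fin v) (Fin (v-1)) ℝ),
      (∀ j, ∑ i, R i j = 0) → J * R = 0 := by
    intro R hR
    ext i j
    simp only [Matrix.mul_apply, hJ, Matrix.of_apply, one_mul, Matrix.zero_apply]
    exact hR j
  have hJQ : J * Q = 0 := hJR0 Q hQc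
  have hQQid : ∀ (R : Matrix (Fin v) (Fin (v-1)) ℝ), J * R = 0 →
      Q * (Qᵀ * R) = a • R := by
    intro R hJR
    rw [← Matrix.mul_assoc, hQQ, Matrix.smul_mul, Matrix.sub_mul, Matrix.one_mul,
      Matrix.smul_mul, hJR, smul_zero, sub_zero]
  -- QᵀQ = a • 1
  have hunit : IsUnit (Qᵀ * Q) := by
    apply isUnit_of_rank_eq_card
    rw [Matrix.rank_transpose_mul_self, hQrank, Fintype.card_fin]
  have hSa : Qᵀ * Q = a • (1 : Matrix (Fin (v-1)) (Fin (v-1)) ℝ) := by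
    have hS2 : (Qᵀ * Q) * (Qᵀ * Q) = (a • (1 : Matrix (Fin (v-1)) (Fin (v-1)) ℝ)) * (Qᵀ * Q) := by
      rw [Matrix.mul_assoc, hQQid Q hJQ, Matrix.mul_smul, Matrix.smul_mul, Matrix.one_mul]
    have hdet : IsUnit (Qᵀ * Q).det := (Matrix.isUnit_iff_isUnit_det _).mp hunit
    have := congrArg (fun M => M * (Qᵀ * Q)⁻¹) hS2
    simpa [Matrix.mul_assoc, Matrix.mul_nonsing_inv _ hdet] using this
  -- diagonal matrices
  set E : Matrix (Fin v) (Fin v) ℝ := diagonal w with hE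
  set D : Matrix (Fin v) (Fin v) ℝ := diagonal (fun u => (w u)⁻¹) with hD
  have hDE : D * E = 1 := by
    rw [hD, hE, diagonal_mul_diagonal]
    ext i j
    rcases eq_or_ne i j with h | h
    · subst h; simp [inv_mul_cancel₀ (hw i).ne']
    · simp [Matrix.diagonal_apply_ne _ h, Matrix.one_apply_ne h]
  have hED : E * D = 1 := by
    rw [hE, hD, diagonal_mul_diagonal]
    ext i j
    rcases eq_or_ne i j with h | h
    · subst h; simp [mul_inv_cancel₀ (hw i).ne']
    · simp [Matrix.diagonal_apply_ne _ h, Matrix.one_apply_ne h]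
  have hEpsd : E.PosSemidef := by
    rw [hE]; exact Matrix.posSemidef_diagonal_iff.mpr fun u => (hw u).le
  have hDpsd : D.PosSemidef := by
    rw [hD]; exact Matrix.posSemidef_diagonal_iff.mpr fun u => (inv_nonneg.mpr (hw u).le)
  have hDsym : Dᵀ = D := by rw [hD, diagonal_transpose]
  have hEsym : Eᵀ = E := by rw [hE, diagonal_transpose]
  -- C and N
  set C : Matrix (Fin (v-1)) (Fin (v-1)) ℝ := Qᵀ * D * Q with hC
  have hCsym : Cᵀ = C := by
    rw [hC, Matrix.transpose_mul, Matrix.transpose_mul, Matrix.transpose_transpose, hDsym,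
      Matrix.mul_assoc]
  have hCpsd : C.PosSemidef := by
    have := hDpsd.conjTranspose_mul_mul_same Q
    rwa [ct, ← hC] at this
  -- injectivity of C
  have hdot : ∀ x : Fin (v-1) → ℝ, x ⬝ᵥ (C *ᵥ x) = ∑ u, (w u)⁻¹ * ((Q *ᵥ x) u)^2 := by
    intro x
    rw [hC, ← Matrix.mulVec_mulVec, Matrix.dotProduct_mulVec, ← Matrix.vecMul_vecMul,
      Matrix.vecMul_transpose, hD]
    simp only [Matrix.vecMul_diagonal, dotProduct]
    refine Finset.sum_congr rfl fun u _ => by ring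
  have hCinj : ∀ x, C *ᵥ x = 0 → x = 0 := by
    intro x hx0
    have h1 : ∑ u, (w u)⁻¹ * ((Q *ᵥ x) u)^2 = 0 := by
      rw [← hdot x, hx0, dotProduct_zero]
    have h2 : ∀ u, (Q *ᵥ x) u = 0 := by
      intro u
      have hterm := (Finset.sum_eq_zero_iff_of_nonneg
        (fun u _ => mul_nonneg (inv_nonneg.mpr (hw u).le) (sq_nonneg _))).mp h1 u (Finset.mem_univ u)
      rcases mul_eq_zero.mp hterm with h | h
      · exact absurd h (inv_ne_zero (hw u).ne')
      · exact pow_eq_zero_iff two_ne_zero |>.mp h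
    have hQx : Q *ᵥ x = 0 := funext h2
    have h3 : (Qᵀ * Q) *ᵥ x = 0 := by
      rw [← Matrix.mulVec_mulVec, hQx, Matrix.mulVec_zero]
    rw [hSa, Matrix.smul_mulVec, Matrix.one_mulVec] at h3
    simpa [ha'] using h3
  have hCunit : IsUnit C := by
    rw [← Matrix.mulVec_injective_iff_isUnit]
    intro x y hxy
    have : C *ᵥ (x - y) = 0 := by
      rw [Matrix.mulVec_sub, hxy, sub_self]
    exact sub_eq_zero.mp (hCinj _ this)
  have hdet : IsUnit C.det := (Matrix.isUnit_iff_isUnit_det _).mp hCunit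
  set N : Matrix (Fin (v-1)) (Fin (v-1)) ℝ := C⁻¹ with hN
  have hCN : C * N = 1 := Matrix.mul_nonsing_inv _ hdet
  have hNC : N * C = 1 := Matrix.nonsing_inv_mul _ hdet
  have hNsym : Nᵀ = N := by rw [hN, Matrix.transpose_nonsing_inv, hCsym]
  have hNpsd : N.PosSemidef := hCpsd.inv
  -- the Gauss–Markov bound  N ⪯ (a⁻¹a⁻¹) • Qᵀ E Q
  set Bb : Matrix (Fin (v-1)) (Fin (v-1)) ℝ := (a⁻¹ * a⁻¹) • (Qᵀ * (E * Q)) with hBb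
  set K : Matrix (Fin v) (Fin (v-1)) ℝ := a⁻¹ • Q - D * (Q * N) with hK
  have hEK : E * K = a⁻¹ • (E * Q) - Q * N := by
    rw [hK, Matrix.mul_sub, Matrix.mul_smul, ← Matrix.mul_assoc, hED, Matrix.one_mul]
  have hKT : Kᵀ = a⁻¹ • Qᵀ - N * (Qᵀ * D) := by
    rw [hK, Matrix.transpose_sub, Matrix.transpose_smul, Matrix.transpose_mul,
      Matrix.transpose_mul, hNsym, hDsym, Matrix.mul_assoc]
  have hkey : Kᵀ * (E * K) = Bb - N := by
    rw [hEK, hKT, Matrix.sub_mul, Matrix.mul_sub, Matrix.mul_sub]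
    have t1 : (a⁻¹ • Qᵀ) * (a⁻¹ • (E * Q)) = Bb := by
      rw [hBb, Matrix.smul_mul, Matrix.mul_smul, smul_smul]
    have t2 : (a⁻¹ • Qᵀ) * (Q * N) = N := by
      rw [Matrix.smul_mul, ← Matrix.mul_assoc, hSa, Matrix.smul_mul, Matrix.one_mul,
        smul_smul, inv_mul_cancel₀ ha', one_smul]
    have t3 : (N * (Qᵀ * D)) * (a⁻¹ • (E * Q)) = N := by
      rw [Matrix.mul_smul, Matrix.mul_assoc, Matrix.mul_assoc, ← Matrix.mul_assoc D E Q,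
        hDE, Matrix.one_mul, hSa, Matrix.mul_smul, Matrix.mul_one,
        smul_smul, inv_mul_cancel₀ ha', one_smul]
    have t4 : (N * (Qᵀ * D)) * (Q * N) = N := by
      rw [Matrix.mul_assoc, ← Matrix.mul_assoc (Qᵀ * D) Q N, ← hC, hCN, Matrix.mul_one]
    rw [t1, t2, t3, t4]
    abel
  have hBbpsd : Bb.PosSemidef := by
    rw [hBb]
    refine psd_smul ?_ (by positivity)
    have := hEpsd.conjTranspose_mul_mul_same Q
    rwa [ct, Matrix.mul_assoc] at this
  have hdiffpsd : (Bb - N).PosSemidef := by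
    rw [← hkey]
    have := hEpsd.conjTranspose_mul_mul_same K
    rwa [ct, Matrix.mul_assoc] at this
  have step1 : Φ N ≤ Φ Bb := hiso N Bb hNpsd hBbpsd hdiffpsd
  -- cyclic shifts
  set R : Fin v → Matrix (Fin v) (Fin (v-1)) ℝ := fun t => Q.submatrix (fun i => i + t) id
    with hR
  have hRapp : ∀ t i j, R t i j = Q (i + t) j := by
    intro t i j; rw [hR]; rfl
  have hshift : ∀ (t : Fin v) (f : Fin v → ℝ), ∑ i, f (i + t) = ∑ i, f i := by
    intro t f
    exact Equiv.sum_comp (Equiv.addRight t) f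
  have hshiftL : ∀ (i : Fin v) (f : Fin v → ℝ), ∑ t, f (i + t) = ∑ t, f t := by
    intro i f
    exact Equiv.sum_comp (Equiv.addLeft i) f
  have hJRt : ∀ t, J * R t = 0 := by
    intro t
    apply hJR0
    intro j
    calc ∑ i, R t i j = ∑ i, Q i j := by
          simp only [hRapp]
          exact hshift t (fun i => Q i j)
      _ = 0 := hQc j
  have hRRt : ∀ t, (R t)ᵀ * (R t) = Qᵀ * Q := by
    intro t
    ext j k
    rw [Matrix.mul_apply, Matrix.mul_apply]
    simp only [Matrix.transpose_apply, hRapp]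
    exact hshift t (fun i => Q i j * Q i k)
  set U : Fin v → Matrix (Fin (v-1)) (Fin (v-1)) ℝ := fun t => a⁻¹ • (Qᵀ * R t) with hU
  have hQU : ∀ t, Q * U t = R t := by
    intro t
    rw [hU]
    simp only
    rw [Matrix.mul_smul, hQQid (R t) (hJRt t), smul_smul, inv_mul_cancel₀ ha', one_smul]
  have hUT : ∀ t, (U t)ᵀ = a⁻¹ • ((R t)ᵀ * Q) := by
    intro t
    rw [hU]
    simp only
    rw [Matrix.transpose_smul, Matrix.transpose_mul, Matrix.transpose_transpose]
  have hUU : ∀ t, (U t)ᵀ * U t = 1 := by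
    intro t
    rw [hUT, hU]
    simp only
    rw [Matrix.smul_mul, Matrix.mul_smul, Matrix.mul_assoc, hQQid (R t) (hJRt t),
      Matrix.mul_smul, hRRt t, hSa, smul_smul, smul_smul, smul_smul]
    rw [show a⁻¹ * a⁻¹ * a * a = 1 by field_simp]
    rw [one_smul]
  set Bt : Fin v → Matrix (Fin (v-1)) (Fin (v-1)) ℝ :=
    fun t => (a⁻¹ * a⁻¹) • ((R t)ᵀ * (E * R t)) with hBt
  have hBtU : ∀ t, Bt t = (U t)ᵀ * Bb * (U t)ᵀᵀ := by
    intro t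
    have h1 : (U t)ᵀ * Bb * (U t)ᵀᵀ
        = (a⁻¹ * a⁻¹) • ((Q * U t)ᵀ * (E * (Q * U t))) := by
      rw [Matrix.transpose_transpose, hBb, Matrix.transpose_mul,
        Matrix.mul_smul ((U t)ᵀ) (a⁻¹ * a⁻¹) (Qᵀ * (E * Q)),
        Matrix.smul_mul (a⁻¹ * a⁻¹) ((U t)ᵀ * (Qᵀ * (E * Q))) (U t)]
      congr 1
      simp only [Matrix.mul_assoc]
    rw [h1, hQU t, hBt]
  have hΦBt : ∀ t, Φ (Bt t) = Φ Bb := by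
    intro t
    rw [hBtU t]
    exact hinv ((U t)ᵀ) (by rw [Matrix.transpose_transpose]; exact hUU t) Bb
  have hBtpsd : ∀ t, (Bt t).PosSemidef := by
    intro t
    rw [hBt]
    simp only
    refine psd_smul ?_ (by positivity)
    have := hEpsd.conjTranspose_mul_mul_same (R t)
    rwa [ct, Matrix.mul_assoc] at this
  -- sum of the shifted matrices
  have hsumB : ∑ t, Bt t = a⁻¹ • (1 : Matrix (Fin (v-1)) (Fin (v-1)) ℝ) := by
    have h1 : ∑ t, ((R t)ᵀ * (E * R t)) = a • (1 : Matrix (Fin (v-1)) (Fin (v-1)) ℝ) := by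
      have hentry : ∀ t j k, ((R t)ᵀ * (E * R t)) j k
          = ∑ i, w i * (Q (i + t) j * Q (i + t) k) := by
        intro t j k
        rw [Matrix.mul_apply]
        refine Finset.sum_congr rfl fun i _ => ?_
        rw [Matrix.transpose_apply, hE, Matrix.diagonal_mul, hRapp, hRapp]
        ring
      ext j k
      rw [Matrix.sum_apply]
      calc ∑ t, ((R t)ᵀ * (E * R t)) j k
          = ∑ t, ∑ i, w i * (Q (i + t) j * Q (i + t) k) := by
            exact Finset.sum_congr rfl fun t _ => hentry t j k
        _ = ∑ i, ∑ t, w i * (Q (i + t) j * Q (i + t) k) := Finset.sum_comm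
        _ = ∑ i, w i * ((Qᵀ * Q) j k) := by
            refine Finset.sum_congr rfl fun i _ => ?_
            rw [← Finset.mul_sum, hshiftL i (fun u => Q u j * Q u k)]
            rw [Matrix.mul_apply]
            simp only [Matrix.transpose_apply]
        _ = (a • (1 : Matrix (Fin (v-1)) (Fin (v-1)) ℝ)) j k := by
            rw [← Finset.sum_mul, hw1, one_mul, hSa]
    rw [hBt]
    simp only
    rw [← Finset.smul_sum, h1, smul_smul]
    congr 1
    field_simp
  -- Jensen over the v shifts
  have hjen := jensen Φ hconc (Finset.univ : Finset (Fin v)) Finset.univ_nonempty Bt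
    (fun t _ => hBtpsd t)
  rw [Finset.card_univ, Fintype.card_fin, hsumB] at hjen
  have hsumΦ : ∑ t : Fin v, Φ (Bt t) = (v : ℝ) * Φ Bb := by
    rw [Finset.sum_congr rfl fun t _ => hΦBt t, Finset.sum_const, Finset.card_univ,
      Fintype.card_fin, nsmul_eq_mul]
  rw [hsumΦ] at hjen
  have step2 : Φ Bb ≤ Φ ((v : ℝ)⁻¹ • (a⁻¹ • (1 : Matrix (Fin (v-1)) (Fin (v-1)) ℝ))) :=
    le_of_mul_le_mul_left hjen hvR
  -- identify the RHS
  have hRHS : (Qᵀ * diagonal (fun _ : Fin v => ((v : ℝ)⁻¹)⁻¹) * Q)⁻¹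
      = (v : ℝ)⁻¹ • (a⁻¹ • (1 : Matrix (Fin (v-1)) (Fin (v-1)) ℝ)) := by
    have h2 : diagonal (fun _ : Fin v => ((v:ℝ)⁻¹)⁻¹)
        = (v:ℝ) • (1 : Matrix (Fin v) (Fin v) ℝ) := by
      ext i j
      by_cases h : i = j <;>
        simp [Matrix.diagonal_apply, Matrix.one_apply, h, inv_inv]
    rw [h2, Matrix.mul_smul, Matrix.smul_mul, Matrix.mul_one, hSa, smul_smul]
    apply Matrix.inv_eq_right_inv
    rw [smul_smul, Matrix.smul_mul, Matrix.one_mul, smul_smul]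
    rw [show (v:ℝ) * a * ((v:ℝ)⁻¹ * a⁻¹) = 1 by field_simp]
    rw [one_smul]
  rw [hRHS]
  exact le_trans step1 step2

end
end

section
/- Let v, g be integers with 0 < g < v/2. For w ∈ ℝ^v with all w_u > 0 and Σ_u w_u = 1, define Ψ(w) = (v−g) Σ_{i=1}^{g} 1/w_i + g Σ_{j=g+1}^{v} 1/w_j (this equals Σ_{1≤i≤g<j≤v}(1/w_i + 1/w_j) = trace(Qᵀ diag(w)⁻¹ Q) for the contrast matrix Q of comparison of treatments with controls, i.e., it is the A-criterion value of w). Let γ = (√(g(v−g)) − g) / (v − 2g) and let w* ∈ ℝ^v be given by w*_i = γ/g for 1 ≤ i ≤ g and w*_j = (1−γ)/(v−g) for g+1 ≤ j ≤ v. Then Ψ(w) ≥ Ψ(w*) = g·v·(v−g) + 2(g(v−g))^{3/2} for every such w, with equality if and only if w = w*. Hence w* is the A-optimal (Φ_{−1}-optimal) treatment proportions design for comparison of v−g treatments with g controls. -/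
open Matrix Finset

noncomputable section

/-- The A-criterion value Ψ(w) = (v−g) Σ_{i≤g} 1/w_i + g Σ_{j>g} 1/w_j
= trace(Qᵀ diag(w)⁻¹ Q) for comparison of v−g treatments with g controls. -/
def Psi (v g : ℕ) (w : Fin v → ℝ) : ℝ :=
  ((v : ℝ) - g) * ∑ i ∈ Finset.univ.filter (fun i : Fin v => (i : ℕ) < g), (w i)⁻¹
    + (g : ℝ) * ∑ i ∈ Finset.univ.filter (fun i : Fin v => g ≤ (i : ℕ)), (w i)⁻¹

lemma aux_id (k x c : ℝ) (hx : x ≠ 0) (hc : c ≠ 0) :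
    k * x⁻¹ - (2 * k * c⁻¹ - k / c ^ 2 * x) = k * (x - c) ^ 2 / (x * c ^ 2) := by
  field_simp; ring

lemma card_filter_lt (v g : ℕ) (h : g ≤ v) :
    (Finset.univ.filter fun i : Fin v => (i : ℕ) < g).card = g := by
  rw [Finset.card_filter]
  rw [Fin.sum_univ_eq_sum_range (fun i => if i < g then 1 else 0)]
  rw [← Finset.card_filter]
  have : Finset.filter (fun i => i < g) (range v) = range g := by
    ext i; simp; omega
  rw [this, Finset.card_range]

/-- The design w* with w*_i = γ/g on the g controls and
w*_j = (1−γ)/(v−g) on the v−g treatments, γ = (√(g(v−g)) − g)/(v−2g), is the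
unique minimizer of the A-criterion Ψ, and
Ψ(w*) = g·v·(v−g) + 2(g(v−g))^{3/2}. -/
theorem stmt12 {v g : ℕ} (hg : 0 < g) (hgv : 2 * g < v)
    (γ : ℝ) (hγ : γ = (Real.sqrt ((g : ℝ) * ((v : ℝ) - g)) - g) / ((v : ℝ) - 2 * g))
    (wstar : Fin v → ℝ)
    (hws : ∀ i, wstar i = if (i : ℕ) < g then γ / g else (1 - γ) / ((v : ℝ) - g))
    (w : Fin v → ℝ) (hw : ∀ u, 0 < w u) (hw1 : ∑ u, w u = 1) :
    Psi v g wstar = (g : ℝ) * v * ((v : ℝ) - g)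
        + 2 * ((g : ℝ) * ((v : ℝ) - g)) ^ ((3 : ℝ) / 2) ∧
    Psi v g wstar ≤ Psi v g w ∧
    (Psi v g w = Psi v g wstar ↔ w = wstar) := by
  -- basic real facts
  set gR : ℝ := (g : ℝ) with hgR
  set tR : ℝ := (v : ℝ) - g with htR
  have hg0 : (0:ℝ) < gR := by rw [hgR]; exact_mod_cast hg
  have h2gv : (2 * g : ℝ) < v := by exact_mod_cast hgv
  have hgt : gR < tR := by rw [htR, hgR]; push_cast at h2gv ⊢; linarith
  have ht0 : (0:ℝ) < tR := lt_trans hg0 hgt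
  set sg : ℝ := Real.sqrt gR with hsg
  set st : ℝ := Real.sqrt tR with hst
  have hsg0 : 0 < sg := Real.sqrt_pos.mpr hg0
  have hst0 : 0 < st := Real.sqrt_pos.mpr ht0
  have hsg2 : sg ^ 2 = gR := Real.sq_sqrt hg0.le
  have hst2 : st ^ 2 = tR := Real.sq_sqrt ht0.le
  have hsglt : sg < st := Real.sqrt_lt_sqrt hg0.le hgt
  -- γ in closed form
  have hγ' : γ = sg / (sg + st) := by
    rw [hγ]
    have h1 : Real.sqrt (gR * tR) = sg * st := Real.sqrt_mul hg0.le tR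
    have h2 : (v : ℝ) - 2 * g = (st - sg) * (st + sg) := by
      have h3 : (v:ℝ) - 2*g = tR - gR := by rw [htR, hgR]; ring
      rw [h3, ← hsg2, ← hst2]; ring
    rw [h1, h2, show sg * st - (g:ℝ) = (st - sg) * sg by rw [← hgR, ← hsg2]; ring]
    rw [mul_div_mul_left _ _ (by linarith : st - sg ≠ 0)]
    rw [add_comm]
  have hγpos : 0 < γ := by rw [hγ']; positivity
  have h1γ : 1 - γ = st / (sg + st) := by
    rw [hγ']; field_simp; ring
  have h1γpos : 0 < 1 - γ := by rw [h1γ]; positivity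
  -- the two values of wstar
  set c₁ : ℝ := γ / gR with hc₁
  set c₂ : ℝ := (1 - γ) / tR with hc₂
  have hc₁0 : 0 < c₁ := div_pos hγpos hg0
  have hc₂0 : 0 < c₂ := div_pos h1γpos ht0
  have hc₁v : c₁ = 1 / (sg * (sg + st)) := by
    rw [hc₁, hγ', div_div, ← hsg2]; field_simp
  have hc₂v : c₂ = 1 / (st * (sg + st)) := by
    rw [hc₂, h1γ, div_div, ← hst2]; field_simp
  have hc₁inv : c₁⁻¹ = sg * (sg + st) := by
    rw [hc₁v]; simp
  have hc₂inv : c₂⁻¹ = st * (sg + st) := by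
    rw [hc₂v]; simp
  -- the optimal value
  set P : ℝ := gR * tR * (sg + st) ^ 2 with hP
  have hws' : ∀ i : Fin v, wstar i = if (i : ℕ) < g then c₁ else c₂ := hws
  have hwspos : ∀ i, 0 < wstar i := by
    intro i; rw [hws']; split
    · exact hc₁0
    · exact hc₂0
  -- coefficient / wstar² = P
  have hPc₁ : tR / c₁ ^ 2 = P := by
    rw [hc₁v, hP, ← hsg2]; field_simp
  have hPc₂ : gR / c₂ ^ 2 = P := by
    rw [hc₂v, hP, ← hst2]; field_simp
  -- cardinalities
  have hgvle : g ≤ v := by omega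
  have hcard1 : (Finset.univ.filter fun i : Fin v => (i : ℕ) < g).card = g :=
    card_filter_lt v g hgvle
  have hfiltc : (Finset.univ.filter fun i : Fin v => g ≤ (i : ℕ))
      = (Finset.univ.filter fun i : Fin v => (i : ℕ) < g)ᶜ := by
    ext i; simp [not_lt]
  have hcard2 : (Finset.univ.filter fun i : Fin v => g ≤ (i : ℕ)).card = v - g := by
    rw [hfiltc, Finset.card_compl, hcard1]; simp
  -- sum splitting: Psi as a single sum
  have hsplit : ∀ f : Fin v → ℝ,
      tR * ∑ i ∈ Finset.univ.filter (fun i : Fin v => (i : ℕ) < g), f i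
        + gR * ∑ i ∈ Finset.univ.filter (fun i : Fin v => g ≤ (i : ℕ)), f i
      = ∑ u : Fin v, (if (u : ℕ) < g then tR else gR) * f u := by
    intro f
    rw [← Finset.sum_filter_add_sum_filter_not Finset.univ (fun i : Fin v => (i : ℕ) < g)
      (fun u => (if (u : ℕ) < g then tR else gR) * f u)]
    rw [Finset.mul_sum, Finset.mul_sum]
    congr 1
    · exact Finset.sum_congr rfl (fun i hi => by
        rw [Finset.mem_filter] at hi; rw [if_pos hi.2])
    · rw [hfiltc]
      have : (Finset.univ.filter fun i : Fin v => (i : ℕ) < g)ᶜ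
          = Finset.univ.filter (fun i : Fin v => ¬ (i : ℕ) < g) := by
        ext i; simp
      rw [this]
      exact Finset.sum_congr rfl (fun i hi => by
        rw [Finset.mem_filter] at hi; rw [if_neg hi.2])
  have hPsidef : ∀ u' : Fin v → ℝ, Psi v g u' = ∑ u : Fin v,
      (if (u : ℕ) < g then tR else gR) * (u' u)⁻¹ := by
    intro u'; rw [Psi, ← hsplit (fun u => (u' u)⁻¹)]
  -- value of Psi wstar
  have hPsiStar : Psi v g wstar = P := by
    rw [Psi]
    have e1 : ∑ i ∈ Finset.univ.filter (fun i : Fin v => (i : ℕ) < g), (wstar i)⁻¹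
        = (g : ℝ) * (sg * (sg + st)) := by
      have h : ∀ i ∈ Finset.univ.filter (fun i : Fin v => (i : ℕ) < g),
          (wstar i)⁻¹ = sg * (sg + st) := fun i hi => by
        rw [Finset.mem_filter] at hi; rw [hws' i, if_pos hi.2, hc₁inv]
      rw [Finset.sum_congr rfl h, Finset.sum_const, hcard1, nsmul_eq_mul]
    have e2 : ∑ i ∈ Finset.univ.filter (fun i : Fin v => g ≤ (i : ℕ)), (wstar i)⁻¹
        = ((v - g : ℕ) : ℝ) * (st * (sg + st)) := by
      have h : ∀ i ∈ Finset.univ.filter (fun i : Fin v => g ≤ (i : ℕ)),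
          (wstar i)⁻¹ = st * (sg + st) := fun i hi => by
        rw [Finset.mem_filter] at hi; rw [hws' i, if_neg (not_lt.mpr hi.2), hc₂inv]
      rw [Finset.sum_congr rfl h, Finset.sum_const, hcard2, nsmul_eq_mul]
    have hcast : ((v - g : ℕ) : ℝ) = tR := by
      rw [htR, Nat.cast_sub hgvle]
    rw [e1, e2, hcast, hP, ← hgR]
    ring
  -- closed form of the optimal value
  have hPval : P = gR * v * tR + 2 * (gR * tR) ^ ((3 : ℝ) / 2) := by
    have h32 : (gR * tR) ^ ((3 : ℝ) / 2) = gR * tR * (sg * st) := by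
      rw [show (3 : ℝ) / 2 = 1 + 1 / 2 by norm_num,
        Real.rpow_add (by positivity), Real.rpow_one, ← Real.sqrt_eq_rpow,
        Real.sqrt_mul hg0.le, ← hsg, ← hst]
    rw [h32, hP]
    have hv : (v : ℝ) = gR + tR := by rw [hgR, htR]; ring
    rw [hv]
    linear_combination (gR * tR) * hsg2 + (gR * tR) * hst2
  -- pointwise tangent inequality
  set coef : Fin v → ℝ := fun u => if (u : ℕ) < g then tR else gR with hcoef
  have hcoefpos : ∀ u, 0 < coef u := by
    intro u; rw [hcoef]; dsimp only; split
    · exact ht0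
    · exact hg0
  have hPu : ∀ u : Fin v, coef u / (wstar u) ^ 2 = P := by
    intro u; rw [hcoef, hws' u]; dsimp only; split
    · exact hPc₁
    · exact hPc₂
  have hterm : ∀ u : Fin v,
      coef u * (w u)⁻¹ - (2 * coef u * (wstar u)⁻¹ - P * w u)
        = coef u * (w u - wstar u) ^ 2 / (w u * (wstar u) ^ 2) := by
    intro u
    have h := aux_id (coef u) (w u) (wstar u) (hw u).ne' (hwspos u).ne'
    rw [hPu u] at h
    exact h
  have htermnn : ∀ u : Fin v,
      0 ≤ coef u * (w u - wstar u) ^ 2 / (w u * (wstar u) ^ 2) := by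
    intro u
    have := hcoefpos u
    have := hw u
    have := hwspos u
    positivity
  -- the lower-bound sum
  have hsum2 : ∑ u : Fin v, (2 * coef u * (wstar u)⁻¹ - P * w u) = P := by
    rw [Finset.sum_sub_distrib]
    have h1 : ∑ u : Fin v, 2 * coef u * (wstar u)⁻¹
        = 2 * ∑ u : Fin v, coef u * (wstar u)⁻¹ := by
      rw [Finset.mul_sum]; exact Finset.sum_congr rfl (fun u _ => by ring)
    have h2 : ∑ u : Fin v, P * w u = P := by
      rw [← Finset.mul_sum, hw1, mul_one]
    rw [h1, h2, ← hPsidef wstar, hPsiStar]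
    ring
  have hkey : Psi v g w - Psi v g wstar
      = ∑ u : Fin v, coef u * (w u - wstar u) ^ 2 / (w u * (wstar u) ^ 2) := by
    rw [hPsidef w, hPsiStar, ← hsum2, ← Finset.sum_sub_distrib]
    exact Finset.sum_congr rfl (fun u _ => hterm u)
  have hle : Psi v g wstar ≤ Psi v g w := by
    have : 0 ≤ Psi v g w - Psi v g wstar := by
      rw [hkey]; exact Finset.sum_nonneg (fun u _ => htermnn u)
    linarith
  refine ⟨by rw [hPsiStar, hPval, hgR, htR], hle, ?_⟩
  constructor
  · intro heq
    have hzero : ∑ u : Fin v, coef u * (w u - wstar u) ^ 2 / (w u * (wstar u) ^ 2) = 0 := by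
      rw [← hkey, heq]; ring
    have hall := (Finset.sum_eq_zero_iff_of_nonneg (fun u _ => htermnn u)).mp hzero
    funext u
    have h := hall u (Finset.mem_univ u)
    have hd : (0:ℝ) < w u * (wstar u) ^ 2 := by
      have := hw u; have := hwspos u; positivity
    have h1 : coef u * (w u - wstar u) ^ 2 = 0 := by
      rcases div_eq_zero_iff.mp h with h' | h'
      · exact h'
      · exact absurd h' hd.ne'
    rcases mul_eq_zero.mp h1 with h' | h'
    · exact absurd h' (hcoefpos u).ne'
    · have := sq_eq_zero_iff.mp h'
      linarith [sub_eq_zero.mp this, le_of_eq (sub_eq_zero.mp this)]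
  · intro heq; rw [heq]

end
end

section
/- Let v, g be integers with 0 < g < v/2 and let Q = (−I_g ⊗ 1_{v−g}, 1_g ⊗ I_{v−g})ᵀ be the v × g(v−g) contrast matrix for comparison of the last v−g treatments with the first g controls. Then for every w ∈ ℝ^v with all w_u > 0 and Σ_u w_u = 1, the largest eigenvalue of the symmetric positive semidefinite matrix Qᵀ diag(w)⁻¹ Q satisfies λ_max(Qᵀ diag(w)⁻¹ Q) ≥ 4g(v−g), and equality holds for the design w* given by w*_i = 1/(2g) for 1 ≤ i ≤ g and w*_j = 1/(2(v−g)) for g+1 ≤ j ≤ v. Hence w*, which allocates total weight γ = 1/2 to the controls, is E-optimal (Φ_{−∞}-optimal) for comparison of v−g treatments with g controls. -/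
open Matrix Finset

noncomputable section

/-- The contrast matrix Q = (−I_g ⊗ 1_{v−g}, 1_g ⊗ I_{v−g})ᵀ for comparison of
the last v−g treatments with the first g controls: the column indexed by the
pair (i,j) is the contrast τ_{g+j} − τ_i. -/
def Qcc (v g : ℕ) : Matrix (Fin v) (Fin g × Fin (v - g)) ℝ :=
  Matrix.of fun u p =>
    (if (u : ℕ) = (p.1 : ℕ) then (-1 : ℝ) else 0) +
    (if (u : ℕ) = g + (p.2 : ℕ) then (1 : ℝ) else 0)

/- ### Auxiliary lemmas -/

lemma stmt13_sum_split {M : Type*} [AddCommMonoid M] {v g : ℕ} (h : g ≤ v) (f : Fin v → M) :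
    ∑ u, f u = (∑ i : Fin g, f ⟨i, lt_of_lt_of_le i.2 h⟩) +
      ∑ j : Fin (v - g), f ⟨g + j, by omega⟩ := by
  have hvv : g + (v - g) = v := by omega
  rw [← Fintype.sum_equiv (finSumFinEquiv.trans (finCongr hvv))
    (fun p => f ((finSumFinEquiv.trans (finCongr hvv)) p)) f (fun p => rfl),
    Fintype.sum_sum_type]
  congr 1 <;> refine Finset.sum_congr rfl fun i _ => ?_ <;> congr 1 <;>
    · ext
      simp

lemma stmt13_mulVec_lt {v g : ℕ} (x : Fin g × Fin (v - g) → ℝ) (u : Fin v) (h : (u : ℕ) < g) :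
    (Qcc v g *ᵥ x) u = -∑ j, x (⟨u, h⟩, j) := by
  have key : ∀ p : Fin g × Fin (v - g),
      Qcc v g u p * x p = if p.1 = (⟨u, h⟩ : Fin g) then -(x p) else 0 := by
    intro p
    have h2 : ¬((u : ℕ) = g + (p.2 : ℕ)) := by omega
    rw [Qcc, Matrix.of_apply, if_neg h2, add_zero]
    by_cases hc : (u : ℕ) = (p.1 : ℕ)
    · rw [if_pos hc, if_pos (Fin.ext hc.symm)]; ring
    · rw [if_neg hc, if_neg (fun hcc => hc (by rw [hcc])), zero_mul]
  show ∑ p, Qcc v g u p * x p = _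
  simp only [key]
  rw [Fintype.sum_prod_type]
  have h3 : ∀ i : Fin g, (∑ j, if i = (⟨u, h⟩ : Fin g) then -(x (i, j)) else 0)
      = if i = (⟨u, h⟩ : Fin g) then ∑ j, -(x (i, j)) else 0 := by
    intro i; split_ifs <;> simp
  simp only [h3]
  rw [Finset.sum_ite_eq' univ (⟨u, h⟩ : Fin g)]
  simp

lemma stmt13_mulVec_ge {v g : ℕ} (x : Fin g × Fin (v - g) → ℝ) (j0 : Fin (v - g))
    (hu : g + (j0 : ℕ) < v) :
    (Qcc v g *ᵥ x) ⟨g + j0, hu⟩ = ∑ i, x (i, j0) := by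
  have key : ∀ p : Fin g × Fin (v - g),
      Qcc v g ⟨g + j0, hu⟩ p * x p = if p.2 = j0 then x p else 0 := by
    intro p
    have h1 : ¬(((⟨g + j0, hu⟩ : Fin v) : ℕ) = (p.1 : ℕ)) := by
      have := p.1.2; simp; omega
    rw [Qcc, Matrix.of_apply, if_neg h1, zero_add]
    by_cases hc : ((⟨g + (j0 : ℕ), hu⟩ : Fin v) : ℕ) = g + (p.2 : ℕ)
    · have h4 : p.2 = j0 := by ext; simp at hc; omega
      rw [if_pos hc, if_pos h4, one_mul]
    · have h4 : ¬(p.2 = j0) := by intro hh; apply hc; simp [hh]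
      rw [if_neg hc, if_neg h4, zero_mul]
  show ∑ p, Qcc v g ⟨g + j0, hu⟩ p * x p = _
  simp only [key]
  rw [Fintype.sum_prod_type]
  refine Finset.sum_congr rfl fun i _ => ?_
  rw [Finset.sum_ite_eq' univ j0 (fun j => x (i, j))]
  simp

lemma stmt13_gen_quad {m n : Type*} [Fintype m] [Fintype n] [DecidableEq m]
    (Q : Matrix m n ℝ) (d : m → ℝ) (x : n → ℝ) :
    x ⬝ᵥ ((Qᵀ * diagonal d * Q) *ᵥ x) = ∑ u, d u * (Q *ᵥ x) u ^ 2 := by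
  rw [← mulVec_mulVec, ← mulVec_mulVec, dotProduct_mulVec, vecMul_transpose]
  simp only [dotProduct, mulVec_diagonal]
  exact Finset.sum_congr rfl fun u _ => by ring

lemma stmt13_quad {v g : ℕ} (hgv : g ≤ v) (d : Fin v → ℝ) (x : Fin g × Fin (v - g) → ℝ) :
    x ⬝ᵥ (((Qcc v g)ᵀ * diagonal d * Qcc v g) *ᵥ x)
      = (∑ i : Fin g, d ⟨i, lt_of_lt_of_le i.2 hgv⟩ * (∑ j, x (i, j)) ^ 2)
        + ∑ j : Fin (v - g), d ⟨g + j, by omega⟩ * (∑ i, x (i, j)) ^ 2 := by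
  rw [stmt13_gen_quad, stmt13_sum_split hgv]
  congr 1
  · refine Finset.sum_congr rfl fun i _ => ?_
    rw [stmt13_mulVec_lt x _ (show ((⟨i, lt_of_lt_of_le i.2 hgv⟩ : Fin v) : ℕ) < g from i.2)]
    rw [neg_sq]
  · refine Finset.sum_congr rfl fun j _ => ?_
    rw [stmt13_mulVec_ge x j (by omega)]

lemma stmt13_quad_le_iSup {n : Type*} [Fintype n] [DecidableEq n] [Nonempty n]
    {A : Matrix n n ℝ} (hA : A.IsHermitian) (x : n → ℝ) :
    x ⬝ᵥ (A *ᵥ x) ≤ (⨆ i, hA.eigenvalues i) * (x ⬝ᵥ x) := by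
  classical
  set U : Matrix n n ℝ := (hA.eigenvectorUnitary : Matrix n n ℝ) with hU
  set y : n → ℝ := (star U) *ᵥ x with hy
  have hsU : star U = Uᵀ := by
    rw [Matrix.star_eq_conjTranspose, conjTranspose_eq_transpose_of_trivial]
  have hvm : x ᵥ* U = y := by
    rw [hy, hsU, mulVec_transpose]
  have h1 : x ⬝ᵥ (A *ᵥ x) = ∑ i, hA.eigenvalues i * (y i) ^ 2 := by
    conv_lhs => rw [hA.spectral_theorem]
    rw [Unitary.conjStarAlgAut_apply]
    rw [← mulVec_mulVec, ← mulVec_mulVec, dotProduct_mulVec, ← hU, hvm, ← hy]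
    simp only [dotProduct, mulVec_diagonal, Function.comp_apply, RCLike.ofReal_real_eq_id, id_eq]
    exact Finset.sum_congr rfl fun u _ => by ring
  have h2 : x ⬝ᵥ x = ∑ i, (y i) ^ 2 := by
    have hUy : U *ᵥ y = x := by
      rw [hy, mulVec_mulVec, (Matrix.mem_unitaryGroup_iff).mp hA.eigenvectorUnitary.2, one_mulVec]
    conv_lhs => rw [← hUy]
    rw [dotProduct_mulVec, ← mulVec_transpose, ← hsU, mulVec_mulVec,
      (Matrix.mem_unitaryGroup_iff').mp hA.eigenvectorUnitary.2, one_mulVec]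
    simp only [dotProduct]
    exact Finset.sum_congr rfl fun u _ => by ring
  rw [h1, h2, Finset.mul_sum]
  refine Finset.sum_le_sum fun i _ => ?_
  have hle : hA.eigenvalues i ≤ ⨆ j, hA.eigenvalues j :=
    le_ciSup (Set.Finite.bddAbove (Set.finite_range _)) i
  nlinarith [sq_nonneg (y i)]

lemma stmt13_eig_le {n : Type*} [Fintype n] [DecidableEq n]
    {A : Matrix n n ℝ} (hA : A.IsHermitian) {c : ℝ}
    (h : ∀ x : n → ℝ, x ⬝ᵥ (A *ᵥ x) ≤ c * (x ⬝ᵥ x)) (i : n) :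
    hA.eigenvalues i ≤ c := by
  have he := hA.eigenvalues_eq i
  have hv : (⇑(hA.eigenvectorBasis i) : n → ℝ) ⬝ᵥ (⇑(hA.eigenvectorBasis i)) = 1 := by
    have hn1 := hA.eigenvectorBasis.orthonormal.1 i
    rw [EuclideanSpace.norm_eq] at hn1
    have h2 : ∑ j, (hA.eigenvectorBasis i j) ^ 2 = 1 := by
      have := congrArg (· ^ 2) hn1
      simpa [Real.sq_sqrt (Finset.sum_nonneg fun j _ => sq_nonneg _), sq_abs] using this
    simpa [dotProduct, sq] using h2
  have heq : hA.eigenvalues i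
      = (⇑(hA.eigenvectorBasis i) : n → ℝ) ⬝ᵥ (A *ᵥ ⇑(hA.eigenvectorBasis i)) := by
    simpa using he
  rw [heq]
  calc _ ≤ c * ((⇑(hA.eigenvectorBasis i) : n → ℝ) ⬝ᵥ ⇑(hA.eigenvectorBasis i)) := h _
  _ = c := by rw [hv, mul_one]

/-- Cauchy–Schwarz: card² ≤ (∑ f)(∑ f⁻¹) for positive f. -/
lemma stmt13_cs {ι : Type*} [Fintype ι] (f : ι → ℝ) (hf : ∀ i, 0 < f i) :
    ((Fintype.card ι : ℝ)) ^ 2 ≤ (∑ i, f i) * ∑ i, (f i)⁻¹ := by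
  have h := Finset.sum_mul_sq_le_sq_mul_sq univ (fun i => Real.sqrt (f i))
    (fun i => (Real.sqrt (f i))⁻¹)
  have h1 : ∑ i, Real.sqrt (f i) * (Real.sqrt (f i))⁻¹ = (Fintype.card ι : ℝ) := by
    rw [Finset.sum_congr rfl fun i _ =>
      mul_inv_cancel₀ (ne_of_gt (Real.sqrt_pos.2 (hf i)))]
    simp [Finset.card_univ]
  have h2 : ∀ i, (Real.sqrt (f i)) ^ 2 = f i := fun i => Real.sq_sqrt (hf i).le
  have h3 : ∀ i, ((Real.sqrt (f i))⁻¹) ^ 2 = (f i)⁻¹ := fun i => by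
    rw [inv_pow, h2]
  calc ((Fintype.card ι : ℝ)) ^ 2
      = (∑ i, Real.sqrt (f i) * (Real.sqrt (f i))⁻¹) ^ 2 := by rw [h1]
    _ ≤ (∑ i, (Real.sqrt (f i)) ^ 2) * ∑ i, ((Real.sqrt (f i))⁻¹) ^ 2 := h
    _ = (∑ i, f i) * ∑ i, (f i)⁻¹ := by
        simp only [h2, h3]

set_option maxHeartbeats 1000000 in
/-- The lower bound part, for any design. -/
lemma stmt13_lower {v g : ℕ} (hg : 0 < g) (hgv : 2 * g < v)
    (w : Fin v → ℝ) (hw : ∀ u, 0 < w u) (hw1 : ∑ u, w u = 1)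
    (hA : ((Qcc v g)ᵀ * diagonal (fun u => (w u)⁻¹) * Qcc v g).IsHermitian) :
    4 * (g : ℝ) * ((v : ℝ) - g) ≤ ⨆ p, hA.eigenvalues p := by
  have hgle : g ≤ v := by omega
  have hnn : 0 < v - g := by omega
  haveI : Nonempty (Fin g) := ⟨⟨0, hg⟩⟩
  haveI : Nonempty (Fin (v - g)) := ⟨⟨0, hnn⟩⟩
  haveI : Nonempty (Fin g × Fin (v - g)) := ⟨(⟨0, hg⟩, ⟨0, hnn⟩)⟩
  set n : ℝ := ((v - g : ℕ) : ℝ) with hn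
  have hncast : (v : ℝ) - g = n := by rw [hn]; push_cast [hgle]; ring
  have hnpos : 0 < n := by rw [hn]; exact_mod_cast hnn
  have hgpos : 0 < (g : ℝ) := by exact_mod_cast hg
  set x : Fin g × Fin (v - g) → ℝ := fun _ => 1 with hx
  have hxx : x ⬝ᵥ x = (g : ℝ) * n := by
    simp [dotProduct, hx, Finset.card_univ, hn]
  have hq := stmt13_quad hgle (fun u => (w u)⁻¹) x
  set Sc : ℝ := ∑ i : Fin g, (w ⟨i, lt_of_lt_of_le i.2 hgle⟩)⁻¹ with hSc
  set St : ℝ := ∑ j : Fin (v - g), (w ⟨g + j, by omega⟩)⁻¹ with hSt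
  have hqv : x ⬝ᵥ (((Qcc v g)ᵀ * diagonal (fun u => (w u)⁻¹) * Qcc v g) *ᵥ x)
      = Sc * n ^ 2 + St * (g : ℝ) ^ 2 := by
    rw [hq, hSc, hSt, Finset.sum_mul, Finset.sum_mul]
    congr 1 <;> refine Finset.sum_congr rfl fun i _ => ?_ <;>
      simp [hx, Finset.card_univ, hn]
  set γ : ℝ := ∑ i : Fin g, w ⟨i, lt_of_lt_of_le i.2 hgle⟩ with hγ
  set δ : ℝ := ∑ j : Fin (v - g), w ⟨g + j, by omega⟩ with hδ
  have hγδ : γ + δ = 1 := by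
    rw [hγ, hδ, ← hw1, stmt13_sum_split hgle w]
  have hγpos : 0 < γ := Finset.sum_pos (fun i _ => hw _) univ_nonempty
  have hδpos : 0 < δ := Finset.sum_pos (fun i _ => hw _) univ_nonempty
  have hcs1 : (g : ℝ) ^ 2 ≤ γ * Sc := by
    have := stmt13_cs (fun i : Fin g => w ⟨i, lt_of_lt_of_le i.2 hgle⟩) (fun i => hw _)
    simpa [Fintype.card_fin, hγ, hSc] using this
  have hcs2 : n ^ 2 ≤ δ * St := by
    have := stmt13_cs (fun j : Fin (v - g) => w ⟨g + j, by omega⟩) (fun j => hw _)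
    simpa [Fintype.card_fin, hδ, hSt, hn] using this
  clear hq
  have hmain : 4 * ((g : ℝ) * n) * ((g : ℝ) * n) ≤ Sc * n ^ 2 + St * (g : ℝ) ^ 2 := by
    clear hqv hw1 hw hA
    clear_value Sc St γ δ n
    have k1 := mul_le_mul_of_nonneg_right hcs1 (mul_nonneg hδpos.le (sq_nonneg n))
    have k2 := mul_le_mul_of_nonneg_right hcs2 (mul_nonneg hγpos.le (sq_nonneg (g : ℝ)))
    have k0 : (g : ℝ) ^ 2 * n ^ 2 * (γ + δ) ≤ (γ * δ) * (Sc * n ^ 2 + St * (g : ℝ) ^ 2) := by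
      nlinarith [k1, k2]
    have k5 : (g : ℝ) ^ 2 * n ^ 2 ≤ (γ * δ) * (Sc * n ^ 2 + St * (g : ℝ) ^ 2) := by
      calc (g : ℝ) ^ 2 * n ^ 2 = (g : ℝ) ^ 2 * n ^ 2 * (γ + δ) := by rw [hγδ, mul_one]
        _ ≤ _ := k0
    have k3 : 4 * γ * δ ≤ 1 := by nlinarith [sq_nonneg (γ - δ)]
    nlinarith [k5, mul_pos hγpos hδpos,
      mul_le_mul_of_nonneg_right k3 (by positivity : (0:ℝ) ≤ (g : ℝ) ^ 2 * n ^ 2)]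
  have hupper := stmt13_quad_le_iSup hA x
  rw [hqv, hxx] at hupper
  have hC : 4 * ((g : ℝ) * n) * ((g : ℝ) * n) ≤ (⨆ p, hA.eigenvalues p) * ((g : ℝ) * n) :=
    le_trans hmain hupper
  have hgn : 0 < (g : ℝ) * n := mul_pos hgpos hnpos
  rw [hncast]
  calc 4 * (g : ℝ) * n = 4 * ((g : ℝ) * n) := by ring
    _ ≤ ⨆ p, hA.eigenvalues p := by
        exact le_of_mul_le_mul_right (by linarith [hC]) hgn

/-- For every treatment proportions design w,
λ_max(Qᵀ diag(w)⁻¹ Q) ≥ 4g(v−g), with equality for the design w* allocating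
weight 1/(2g) to each control and 1/(2(v−g)) to each treatment; hence w*
(total control weight γ = 1/2) is E-optimal for comparing v−g treatments with
g controls. -/
theorem stmt13 {v g : ℕ} (hg : 0 < g) (hgv : 2 * g < v)
    (w : Fin v → ℝ) (hw : ∀ u, 0 < w u) (hw1 : ∑ u, w u = 1)
    (wstar : Fin v → ℝ)
    (hws : ∀ i, wstar i = if (i : ℕ) < g then (2 * (g : ℝ))⁻¹
      else (2 * ((v : ℝ) - g))⁻¹) :
    (∀ hA : ((Qcc v g)ᵀ * diagonal (fun u => (w u)⁻¹) * Qcc v g).IsHermitian,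
      4 * (g : ℝ) * ((v : ℝ) - g) ≤ ⨆ p, hA.eigenvalues p) ∧
    (∀ hA : ((Qcc v g)ᵀ * diagonal (fun u => (wstar u)⁻¹) * Qcc v g).IsHermitian,
      (⨆ p, hA.eigenvalues p) = 4 * (g : ℝ) * ((v : ℝ) - g)) := by
  have hgle : g ≤ v := by omega
  have hnn : 0 < v - g := by omega
  haveI : Nonempty (Fin g × Fin (v - g)) := ⟨(⟨0, hg⟩, ⟨0, hnn⟩)⟩
  have hgpos : 0 < (g : ℝ) := by exact_mod_cast hg
  have hvgpos : 0 < (v : ℝ) - g := by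
    have : (g : ℝ) < v := by exact_mod_cast (by omega : g < v)
    linarith
  -- wstar is a valid design
  have hwspos : ∀ u, 0 < wstar u := by
    intro u; rw [hws]; split_ifs
    · positivity
    · positivity
  have hws1 : ∑ u, wstar u = 1 := by
    rw [stmt13_sum_split hgle wstar]
    have h1 : ∀ i : Fin g, wstar ⟨i, lt_of_lt_of_le i.2 hgle⟩ = (2 * (g : ℝ))⁻¹ := by
      intro i; rw [hws]; exact if_pos i.2
    have h2 : ∀ j : Fin (v - g), wstar ⟨g + j, by omega⟩ = (2 * ((v : ℝ) - g))⁻¹ := by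
      intro j; rw [hws]; exact if_neg (by simp)
    rw [Finset.sum_congr rfl fun i _ => h1 i, Finset.sum_congr rfl fun j _ => h2 j,
      Finset.sum_const, Finset.sum_const, Finset.card_univ, Finset.card_univ,
      Fintype.card_fin, Fintype.card_fin, nsmul_eq_mul, nsmul_eq_mul]
    have hc : ((v - g : ℕ) : ℝ) = (v : ℝ) - g := by push_cast [hgle]; ring
    rw [hc]
    field_simp
    ring
  constructor
  · intro hA
    exact stmt13_lower hg hgv w hw hw1 hA
  · intro hA
    refine le_antisymm ?_ (stmt13_lower hg hgv wstar hwspos hws1 hA)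
    refine ciSup_le fun p => ?_
    refine stmt13_eig_le hA (fun x => ?_) p
    rw [stmt13_quad hgle (fun u => (wstar u)⁻¹) x]
    have hd1 : ∀ i : Fin g, (wstar ⟨i, lt_of_lt_of_le i.2 hgle⟩)⁻¹ = 2 * (g : ℝ) := by
      intro i; rw [hws]; rw [if_pos i.2, inv_inv]
    have hd2 : ∀ j : Fin (v - g),
        (wstar (⟨g + j, by omega⟩ : Fin v))⁻¹ = 2 * ((v : ℝ) - g) := by
      intro j; rw [hws]; rw [if_neg (by simp), inv_inv]
    have hxx : x ⬝ᵥ x = ∑ i : Fin g, ∑ j : Fin (v - g), x (i, j) ^ 2 := by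
      simp [dotProduct, Fintype.sum_prod_type, sq]
    have hb1 : ∑ i : Fin g, (wstar ⟨i, lt_of_lt_of_le i.2 hgle⟩)⁻¹ * (∑ j, x (i, j)) ^ 2
        ≤ 2 * (g : ℝ) * ((v : ℝ) - g) * (x ⬝ᵥ x) := by
      rw [hxx, Finset.mul_sum]
      refine Finset.sum_le_sum fun i _ => ?_
      rw [hd1 i]
      have hcs : (∑ j, x (i, j)) ^ 2 ≤ ((v - g : ℕ) : ℝ) * ∑ j, x (i, j) ^ 2 := by
        simpa [Finset.card_univ] using
          sq_sum_le_card_mul_sum_sq (s := (univ : Finset (Fin (v - g)))) (f := fun j => x (i, j))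
      have hc : ((v - g : ℕ) : ℝ) = (v : ℝ) - g := by push_cast [hgle]; ring
      rw [hc] at hcs
      nlinarith
    have hb2 : ∑ j : Fin (v - g),
        (wstar (⟨g + j, by omega⟩ : Fin v))⁻¹ * (∑ i, x (i, j)) ^ 2
        ≤ 2 * (g : ℝ) * ((v : ℝ) - g) * (x ⬝ᵥ x) := by
      have hxx2 : x ⬝ᵥ x = ∑ j : Fin (v - g), ∑ i : Fin g, x (i, j) ^ 2 := by
        rw [hxx]; exact Finset.sum_comm
      rw [hxx2, Finset.mul_sum]
      refine Finset.sum_le_sum fun j _ => ?_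
      rw [hd2 j]
      have hcs : (∑ i, x (i, j)) ^ 2 ≤ (g : ℝ) * ∑ i, x (i, j) ^ 2 := by
        simpa [Finset.card_univ] using
          sq_sum_le_card_mul_sum_sq (s := (univ : Finset (Fin g))) (f := fun i => x (i, j))
      nlinarith
    calc _ ≤ 2 * (g : ℝ) * ((v : ℝ) - g) * (x ⬝ᵥ x)
        + 2 * (g : ℝ) * ((v : ℝ) - g) * (x ⬝ᵥ x) := add_le_add hb1 hb2
      _ = 4 * (g : ℝ) * ((v : ℝ) - g) * (x ⬝ᵥ x) := by ring

end
end

section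
/- Let v, g be integers with 0 < g < v/2, let γ = (√(g(v−g)) − g)/(v − 2g), and let w* ∈ ℝ^v be given by w*_i = γ/g for 1 ≤ i ≤ g and w*_j = (1−γ)/(v−g) for g+1 ≤ j ≤ v. Then for every w ∈ ℝ^v with all w_u > 0 and Σ_u w_u = 1, max over pairs (i,j) with 1 ≤ i ≤ g and g+1 ≤ j ≤ v of (1/w_i + 1/w_j) is at least v + 2√(g(v−g)), and equality holds at w = w*. Hence w* is MV-optimal (it minimizes the maximum variance of the contrasts of interest) for comparison of v−g treatments with g controls. -/
open Finset

noncomputable section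

/-- For every treatment proportions design w, the maximum over
pairs (i,j), i a control and j a treatment, of 1/w_i + 1/w_j (the variance of
the estimator of τ_j − τ_i) is at least v + 2√(g(v−g)), with equality at the
design w* with w*_i = γ/g on controls and w*_j = (1−γ)/(v−g) on treatments,
γ = (√(g(v−g)) − g)/(v−2g); hence w* is MV-optimal. -/
theorem stmt14 {v g : ℕ} (hg : 0 < g) (hgv : 2 * g < v)
    (γ : ℝ) (hγ : γ = (Real.sqrt ((g : ℝ) * ((v : ℝ) - g)) - g) / ((v : ℝ) - 2 * g))
    (wstar : Fin v → ℝ)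
    (hws : ∀ i, wstar i = if (i : ℕ) < g then γ / g else (1 - γ) / ((v : ℝ) - g))
    (w : Fin v → ℝ) (hw : ∀ u, 0 < w u) (hw1 : ∑ u, w u = 1) :
    (∃ i j : Fin v, (i : ℕ) < g ∧ g ≤ (j : ℕ) ∧
      (v : ℝ) + 2 * Real.sqrt ((g : ℝ) * ((v : ℝ) - g)) ≤ (w i)⁻¹ + (w j)⁻¹) ∧
    (∀ i j : Fin v, (i : ℕ) < g → g ≤ (j : ℕ) →
      (wstar i)⁻¹ + (wstar j)⁻¹
        = (v : ℝ) + 2 * Real.sqrt ((g : ℝ) * ((v : ℝ) - g))) := by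
  have hg0 : (0:ℝ) < g := by exact_mod_cast hg
  have hgvR : 2 * (g:ℝ) < v := by exact_mod_cast hgv
  have hvg : (0:ℝ) < (v:ℝ) - g := by linarith
  have hv2g : (0:ℝ) < (v:ℝ) - 2*g := by linarith
  set s := Real.sqrt ((g : ℝ) * ((v : ℝ) - g)) with hsdef
  have hs2 : s^2 = g * ((v:ℝ) - g) := Real.sq_sqrt (by positivity)
  have hs0 : 0 < s := Real.sqrt_pos.mpr (by positivity)
  have hgs : (g:ℝ) < s := by nlinarith
  have hsv : s < (v:ℝ) - g := by nlinarith
  constructor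
  · -- lower bound part
    set C : Finset (Fin v) := univ.filter (fun u : Fin v => (u:ℕ) < g) with hCdef
    set T : Finset (Fin v) := univ.filter (fun u : Fin v => ¬ (u:ℕ) < g) with hTdef
    have hCcard : C.card = g := by
      apply Finset.card_eq_of_bijective (fun i hi => ⟨i, by omega⟩)
      · intro a ha
        simp only [hCdef, mem_filter, mem_univ, true_and] at ha
        exact ⟨a, ha, rfl⟩
      · intro i hi; simp [hCdef]; omega
      · intro i j hi hj h; simpa using congrArg Fin.val h
    have hTcard : T.card = v - g := by
      have := Finset.card_filter_add_card_filter_not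
        (s := (univ : Finset (Fin v))) (p := fun u : Fin v => (u:ℕ) < g)
      simp only [Finset.card_univ, Fintype.card_fin] at this
      rw [← hCdef, ← hTdef] at this
      omega
    have hCne : C.Nonempty := ⟨⟨0, by omega⟩, by simp [hCdef]; omega⟩
    have hTne : T.Nonempty := ⟨⟨g, by omega⟩, by simp [hTdef]⟩
    obtain ⟨i, hiC, hi⟩ := C.exists_min_image w hCne
    obtain ⟨j, hjT, hj⟩ := T.exists_min_image w hTne
    have hiC' : (i:ℕ) < g := by simpa [hCdef] using hiC
    have hjT' : g ≤ (j:ℕ) := by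
      have := hjT; simp [hTdef] at this; omega
    refine ⟨i, j, hiC', hjT', ?_⟩
    set A := ∑ u ∈ C, w u with hA
    set B := ∑ u ∈ T, w u with hB
    have hAB : A + B = 1 := by
      rw [hA, hB, hCdef, hTdef, Finset.sum_filter_add_sum_filter_not, hw1]
    have hApos : 0 < A := Finset.sum_pos (fun u _ => hw u) hCne
    have hBpos : 0 < B := Finset.sum_pos (fun u _ => hw u) hTne
    have hgA : (g:ℝ) * w i ≤ A := by
      calc (g:ℝ) * w i = C.card • w i := by rw [hCcard]; simp [nsmul_eq_mul]
        _ ≤ A := Finset.card_nsmul_le_sum C w (w i) hi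
    have hgB : ((v:ℝ) - g) * w j ≤ B := by
      have : ((v - g : ℕ):ℝ) * w j ≤ B := by
        calc ((v - g : ℕ):ℝ) * w j = T.card • w j := by rw [hTcard]; simp [nsmul_eq_mul]
          _ ≤ B := Finset.card_nsmul_le_sum T w (w j) hj
      have hc : ((v - g : ℕ):ℝ) = (v:ℝ) - g := by
        push_cast [Nat.cast_sub (by omega : g ≤ v)]; ring
      rwa [hc] at this
    have h1 : (g:ℝ) / A ≤ (w i)⁻¹ := by
      rw [div_le_iff₀ hApos, inv_mul_eq_div, le_div_iff₀ (hw i)]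
      linarith
    have h2 : ((v:ℝ) - g) / B ≤ (w j)⁻¹ := by
      rw [div_le_iff₀ hBpos, inv_mul_eq_div, le_div_iff₀ (hw j)]
      linarith
    have key : (v:ℝ) + 2 * s ≤ (g:ℝ) / A + ((v:ℝ) - g) / B := by
      rw [div_add_div _ _ (ne_of_gt hApos) (ne_of_gt hBpos),
        le_div_iff₀ (mul_pos hApos hBpos)]
      have hB1 : B = 1 - A := by linarith
      rw [hB1]
      nlinarith [sq_nonneg (((v:ℝ) + 2*s) * A - ((g:ℝ) + s)), hs2, hs0, hv2g]
    linarith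
  · -- equality part
    intro i j hij hjg
    have hwsi : wstar i = γ / g := by rw [hws i, if_pos hij]
    have hwsj : wstar j = (1 - γ) / ((v:ℝ) - g) := by
      rw [hws j, if_neg (by omega)]
    have hγ0 : 0 < γ := by rw [hγ]; exact div_pos (by linarith) hv2g
    have hγ1 : γ < 1 := by rw [hγ, div_lt_one hv2g]; linarith
    have hne1 : s - (g:ℝ) ≠ 0 := by linarith
    have hne2 : (v:ℝ) - g - s ≠ 0 := by linarith
    have hne3 : (v:ℝ) - 2*g ≠ 0 := ne_of_gt hv2g
    have e1 : (g:ℝ) / γ = g + s := by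
      rw [hγ]; field_simp; linear_combination -hs2
    have h1γ : 1 - γ = ((v:ℝ) - g - s) / ((v:ℝ) - 2*g) := by
      rw [hγ, eq_div_iff hne3, sub_mul, div_mul_cancel₀ _ hne3]; ring
    have e2 : ((v:ℝ) - g) / (1 - γ) = ((v:ℝ) - g) + s := by
      rw [h1γ]; field_simp; linear_combination hs2
    rw [hwsi, hwsj, inv_div, inv_div, e1, e2]
    ring

end
end

section
/- Let v, g be integers with v > 2 and 0 < g < v/2, and let p ∈ (−∞, 0] be real. Define F : [0, 1/2] → ℝ by F(γ) = (v−g−1) γ^{1−p} − (g−1)(1−γ)^{1−p} + 2γ − 1 (real powers). Then F is continuous and strictly increasing on [0, 1/2], F(0) = −g < 0 and F(1/2) = (v−2g)(1/2)^{1−p} > 0; consequently there exists a unique γ_p ∈ (0, 1/2) with F(γ_p) = 0. -/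
noncomputable section

/-- For v > 2, 0 < g < v/2 and p ∈ (−∞,0], the function
F(γ) = (v−g−1)γ^{1−p} − (g−1)(1−γ)^{1−p} + 2γ − 1 is continuous and strictly
increasing on [0,1/2], F(0) = −g < 0, F(1/2) = (v−2g)(1/2)^{1−p} > 0, and F
has a unique root γ_p in (0,1/2). -/
theorem stmt15 {v g : ℕ} (hv : 2 < v) (hg : 0 < g) (hgv : 2 * g < v)
    (p : ℝ) (hp : p ≤ 0)
    (F : ℝ → ℝ)
    (hF : ∀ γ : ℝ, F γ = ((v : ℝ) - g - 1) * γ ^ (1 - p)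
        - ((g : ℝ) - 1) * (1 - γ) ^ (1 - p) + 2 * γ - 1) :
    ContinuousOn F (Set.Icc 0 (1 / 2)) ∧
    StrictMonoOn F (Set.Icc 0 (1 / 2)) ∧
    F 0 = -(g : ℝ) ∧ F 0 < 0 ∧
    F (1 / 2) = ((v : ℝ) - 2 * g) * (1 / 2 : ℝ) ^ (1 - p) ∧ 0 < F (1 / 2) ∧
    (∃! γ : ℝ, γ ∈ Set.Ioo (0 : ℝ) (1 / 2) ∧ F γ = 0) := by
  have hq1 : (1 : ℝ) ≤ 1 - p := by linarith
  have hq0 : (0 : ℝ) ≤ 1 - p := by linarith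
  have hqne : (1 : ℝ) - p ≠ 0 := by linarith
  have hg1 : (1 : ℝ) ≤ (g : ℝ) := by exact_mod_cast hg
  have hgv' : 2 * (g : ℝ) + 1 ≤ (v : ℝ) := by exact_mod_cast hgv
  have hA : (1 : ℝ) ≤ (v : ℝ) - g - 1 := by linarith
  have hB : (0 : ℝ) ≤ (g : ℝ) - 1 := by linarith
  -- continuity
  have hcont : ContinuousOn F (Set.Icc 0 (1 / 2)) := by
    have : Continuous F := by
      have h1 : Continuous fun γ : ℝ => γ ^ (1 - p) :=
        Real.continuous_rpow_const hq0
      have h2 : Continuous fun γ : ℝ => (1 - γ) ^ (1 - p) :=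
        (Real.continuous_rpow_const hq0).comp (continuous_const.sub continuous_id)
      have : Continuous fun γ : ℝ => ((v : ℝ) - g - 1) * γ ^ (1 - p)
          - ((g : ℝ) - 1) * (1 - γ) ^ (1 - p) + 2 * γ - 1 := by
        continuity
      exact this.congr fun x => (hF x).symm
    exact this.continuousOn
  -- strict mono
  have hmono : StrictMonoOn F (Set.Icc 0 (1 / 2)) := by
    intro x hx y hy hxy
    rw [hF, hF]
    have h1 : x ^ (1 - p) ≤ y ^ (1 - p) :=
      Real.rpow_le_rpow hx.1 hxy.le hq0
    have h2 : (1 - y) ^ (1 - p) ≤ (1 - x) ^ (1 - p) := by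
      apply Real.rpow_le_rpow (by linarith [hy.2]) (by linarith) hq0
    have h3 := mul_le_mul_of_nonneg_left h1 (by linarith : (0:ℝ) ≤ (v : ℝ) - g - 1)
    have h4 := mul_le_mul_of_nonneg_left h2 hB
    linarith
  -- F 0
  have hF0 : F 0 = -(g : ℝ) := by
    rw [hF]
    rw [Real.zero_rpow hqne]
    norm_num
  have hF0neg : F 0 < 0 := by rw [hF0]; linarith
  -- F (1/2)
  have hFh : F (1 / 2) = ((v : ℝ) - 2 * g) * (1 / 2 : ℝ) ^ (1 - p) := by
    rw [hF]
    norm_num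
    ring
  have hFhpos : 0 < F (1 / 2) := by
    rw [hFh]
    have : (0 : ℝ) < (1 / 2 : ℝ) ^ (1 - p) := Real.rpow_pos_of_pos (by norm_num) _
    nlinarith
  refine ⟨hcont, hmono, hF0, hF0neg, hFh, hFhpos, ?_⟩
  have hsub : Set.Ioo (F 0) (F (1 / 2)) ⊆ F '' Set.Ioo (0 : ℝ) (1 / 2) :=
    intermediate_value_Ioo (by norm_num) hcont
  obtain ⟨γ, hγ, hγ0⟩ := hsub ⟨hF0neg, hFhpos⟩
  refine ⟨γ, ⟨hγ, hγ0⟩, ?_⟩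
  rintro y ⟨hy, hy0⟩
  have hinj := hmono.injOn
  apply hinj (Set.mem_of_mem_of_subset hy (Set.Ioo_subset_Icc_self))
    (Set.mem_of_mem_of_subset hγ (Set.Ioo_subset_Icc_self))
  rw [hy0, hγ0]

end
end
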